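/- arXiv:2010.08988 — 2 statements merged into one kernel-verified Lean document; each statement's English description precedes it below -/
import Mathlib

section
/- Let D = (V, E) be a minimal obstruction and, for i ∈ {1,2}, let ∅ ≠ Aᵢ ⊆ E be such that D[Aᵢ] is a forest and D/Aᵢ is acyclic. Suppose there is a directed cut of D induced by a partition (X, V∖X) separating A₁ from A₂, i.e., with A₁ ⊆ E(D[X]) and A₂ ⊆ E(D[V∖X]). Then there exists a directed bond of D containing A₁ ∪ A₂. -/
open Relation

/-! ## Finite directed multigraphs -/

/-- A finite directed multigraph: finite vertex and edge types together with
tail and head maps (loops and parallel/anti-parallel edges are allowed). -/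
structure MultiDigraph : Type 1 where
  V : Type
  E : Type
  [fv : Fintype V]
  [fe : Fintype E]
  [dv : DecidableEq V]
  [de : DecidableEq E]
  tail : E → V
  head : E → V

attribute [instance] MultiDigraph.fv MultiDigraph.fe MultiDigraph.dv MultiDigraph.de

namespace MultiDigraph

variable (D : MultiDigraph)

/-- The set of edges crossing the partition `(X, Xᶜ)` of the vertex set. -/
def cutAt (X : Set D.V) : Set D.E :=
  {e | (D.tail e ∈ X ∧ D.head e ∉ X) ∨ (D.tail e ∉ X ∧ D.head e ∈ X)}

/-- A cut: a nonempty set of edges of the form `cutAt X`. -/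
def IsCut (S : Set D.E) : Prop := S.Nonempty ∧ ∃ X : Set D.V, S = D.cutAt X

/-- A bond: a cut containing no other cut properly. -/
def IsBond (S : Set D.E) : Prop := D.IsCut S ∧ ∀ S', D.IsCut S' → S' ⊆ S → S' = S

/-- A directed cut: a nonempty cut `cutAt X` such that no edge enters `X`. -/
def IsDirectedCut (S : Set D.E) : Prop :=
  S.Nonempty ∧ ∃ X : Set D.V, S = D.cutAt X ∧ ∀ e : D.E, ¬(D.tail e ∉ X ∧ D.head e ∈ X)

/-- A directed bond: a bond which is a directed cut. -/
def IsDirectedBond (S : Set D.E) : Prop := D.IsBond S ∧ D.IsDirectedCut S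

/-- An odd dijoin: an edge set meeting every directed bond an odd number of times. -/
def IsOddDijoin (J : Set D.E) : Prop := ∀ S : Set D.E, D.IsDirectedBond S → Odd (J ∩ S).ncard

def HasOddDijoin : Prop := ∃ J : Set D.E, D.IsOddDijoin J

/-- One-step relation used for weak connectivity of the subgraph spanned by `A`:
`x` and `y` are joined by an edge of `A`. -/
def touchRel (A : Set D.E) : D.V → D.V → Prop :=
  fun x y => ∃ e ∈ A, D.tail e = x ∧ D.head e = y

/-- Contraction `D/A`: delete the edges of `A` and identify each weak component of `D[A]`. -/
noncomputable def contract (A : Set D.E) : MultiDigraph :=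
  letI s := EqvGen.setoid (D.touchRel A)
  { V := Quotient s
    E := {e : D.E // e ∉ A}
    fv := Fintype.ofFinite _
    fe := Fintype.ofFinite _
    dv := Classical.decEq _
    de := Classical.decEq _
    tail := fun e => Quotient.mk s (D.tail e.1)
    head := fun e => Quotient.mk s (D.head e.1) }

/-- A step of a directed walk. -/
def dstep : D.V → D.V → Prop := fun a b => ∃ e : D.E, D.tail e = a ∧ D.head e = b

/-- A step of a directed walk avoiding a fixed edge `e₀`. -/
def dstepAvoiding (e₀ : D.E) : D.V → D.V → Prop :=
  fun a b => ∃ e : D.E, e ≠ e₀ ∧ D.tail e = a ∧ D.head e = b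

/-- An edge is deletable if it is not a loop and there is a directed path from its tail
to its head not using it. -/
def Deletable (e : D.E) : Prop :=
  D.tail e ≠ D.head e ∧ ReflTransGen (D.dstepAvoiding e) (D.tail e) (D.head e)

/-- Deleting one edge. -/
noncomputable def deleteEdge (e : D.E) : MultiDigraph where
  V := D.V
  E := {f : D.E // f ≠ e}
  fv := D.fv
  fe := Fintype.ofFinite _
  dv := D.dv
  de := Classical.decEq _
  tail := fun f => D.tail f.1
  head := fun f => D.head f.1

/-- An isolated vertex. -/
def Isolated (v : D.V) : Prop := ∀ e : D.E, D.tail e ≠ v ∧ D.head e ≠ v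

/-- Deleting an isolated vertex. -/
noncomputable def deleteVertex (v : D.V) (h : D.Isolated v) : MultiDigraph where
  V := {u : D.V // u ≠ v}
  E := D.E
  fv := Fintype.ofFinite _
  fe := D.fe
  dv := Classical.decEq _
  de := D.de
  tail := fun e => ⟨D.tail e, (h e).1⟩
  head := fun e => ⟨D.head e, (h e).2⟩

/-- A digraph is acyclic if it has no directed cycle. -/
def Acyclic : Prop := ∀ a b : D.V, D.dstep a b → ¬ ReflTransGen D.dstep b a

/-- A step of an undirected walk. -/
def ustep : D.V → D.V → Prop :=
  fun a b => ∃ e : D.E, (D.tail e = a ∧ D.head e = b) ∨ (D.tail e = b ∧ D.head e = a)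

/-- Weak connectivity. -/
def WeaklyConnected : Prop := ∀ a b : D.V, ReflTransGen D.ustep a b

/-- A step of an undirected walk avoiding the vertex `v`. -/
def ustepAvoiding (v : D.V) : D.V → D.V → Prop :=
  fun a b => a ≠ v ∧ b ≠ v ∧ D.ustep a b

/-- The underlying multigraph is 2-vertex-connected. -/
def TwoConnected : Prop :=
  3 ≤ Fintype.card D.V ∧ D.WeaklyConnected ∧
    ∀ v a b : D.V, a ≠ v → b ≠ v → ReflTransGen (D.ustepAvoiding v) a b

/-- `D` is an oriented graph: no loops and no pair of parallel or anti-parallel edges. -/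
def Oriented : Prop :=
  (∀ e : D.E, D.tail e ≠ D.head e) ∧
    ∀ e f : D.E, e ≠ f → ({D.tail e, D.head e} : Set D.V) ≠ {D.tail f, D.head f}

/-- `D` is transitively reduced: no edge of `D` is deletable. -/
def TransitivelyReduced : Prop := ∀ e : D.E, ¬ D.Deletable e

end MultiDigraph

/-! ## Digraph isomorphism -/

/-- An isomorphism of directed multigraphs. -/
structure DigraphIso (D₁ D₂ : MultiDigraph) where
  vmap : D₁.V ≃ D₂.V
  emap : D₁.E ≃ D₂.E
  tail_eq : ∀ e, D₂.tail (emap e) = vmap (D₁.tail e)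
  head_eq : ∀ e, D₂.head (emap e) = vmap (D₁.head e)

def IsIsomorphic (D₁ D₂ : MultiDigraph) : Prop := Nonempty (DigraphIso D₁ D₂)

/-! ## Cut minors -/

/-- A single cut-minor step: contraction of an edge, deletion of a deletable edge, or
deletion of an isolated vertex. -/
inductive CutMinorStep : MultiDigraph → MultiDigraph → Prop
  | contractEdge (D : MultiDigraph) (e : D.E) : CutMinorStep (D.contract {e}) D
  | delEdge (D : MultiDigraph) (e : D.E) (h : D.Deletable e) : CutMinorStep (D.deleteEdge e) D
  | delVertex (D : MultiDigraph) (v : D.V) (h : D.Isolated v) :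
      CutMinorStep (D.deleteVertex v h) D

/-- `D₁` is a cut minor of `D₂`. -/
def IsCutMinor (D₁ D₂ : MultiDigraph) : Prop := ReflTransGen CutMinorStep D₁ D₂

/-- A proper cut minor: a cut minor which is not isomorphic to the digraph itself. -/
def IsProperCutMinor (D₁ D₂ : MultiDigraph) : Prop :=
  IsCutMinor D₁ D₂ ∧ ¬ IsIsomorphic D₁ D₂

/-- A minimal obstruction: a digraph without an odd dijoin all of whose proper cut minors
have an odd dijoin. -/
def MinimalObstruction (D : MultiDigraph) : Prop :=
  ¬ D.HasOddDijoin ∧ ∀ D' : MultiDigraph, IsProperCutMinor D' D → D'.HasOddDijoin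

/-! ## Cycles and forests in the underlying multigraph -/

namespace MultiDigraph

variable (D : MultiDigraph)

/-- `X : D.E → SignType` is the signed incidence vector of a cycle of the underlying
multigraph of `D`, signs recording forward/backward edges of a cyclic traversal. -/
def IsSignedCycle (X : D.E → SignType) : Prop :=
  ∃ n : ℕ, 0 < n ∧ ∃ (v : ZMod n → D.V) (ed : ZMod n → D.E) (dir : ZMod n → Bool),
    Function.Injective v ∧ Function.Injective ed ∧
    (∀ i, (dir i = true → D.tail (ed i) = v i ∧ D.head (ed i) = v (i + 1)) ∧
      (dir i = false → D.tail (ed i) = v (i + 1) ∧ D.head (ed i) = v i)) ∧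
    (∀ i, X (ed i) = if dir i then 1 else -1) ∧
    (∀ f, (∀ i, ed i ≠ f) → X f = 0)

/-- The sub-multigraph spanned by `A` is a forest: it contains no cycle. -/
def IsForestOn (A : Set D.E) : Prop :=
  ¬ ∃ X : D.E → SignType, D.IsSignedCycle X ∧ ∀ e : D.E, X e ≠ 0 → e ∈ A

end MultiDigraph

/-! ## The cut space over 𝔽₂ -/

/-- Indicator vector of a set, over `𝔽₂ = ZMod 2`. -/
noncomputable def eindicator {α : Type} (C : Set α) : α → ZMod 2 := C.indicator 1

namespace MultiDigraph

variable (D : MultiDigraph)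

/-- The cut space of (the underlying multigraph of) `D`: the `𝔽₂`-span of the
indicator vectors of the bonds. -/
noncomputable def cutSpace : Submodule (ZMod 2) (D.E → ZMod 2) :=
  Submodule.span (ZMod 2) (eindicator '' {S : Set D.E | D.IsBond S})

/-- `ℬ` is a basis of the cut space of `D` (a family of edge sets whose indicator
vectors are linearly independent and span the cut space). -/
noncomputable def IsCutSpaceBasis (ℬ : Set (Set D.E)) : Prop :=
  LinearIndependent (ZMod 2) (fun S : ℬ => eindicator (S : Set D.E)) ∧
    Submodule.span (ZMod 2) (eindicator '' ℬ) = D.cutSpace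

end MultiDigraph

/-! ## Special digraphs -/

/-- The digraph `𝒟(n₀,n₁,n₂)`: three layers, with all edges from layer 0 to layer 1 and
from layer 1 to layer 2. -/
def layeredD (n₀ n₁ n₂ : ℕ) : MultiDigraph where
  V := (Fin n₀ ⊕ Fin n₁) ⊕ Fin n₂
  E := (Fin n₀ × Fin n₁) ⊕ (Fin n₁ × Fin n₂)
  tail := Sum.elim (fun p => Sum.inl (Sum.inl p.1)) (fun p => Sum.inl (Sum.inr p.1))
  head := Sum.elim (fun p => Sum.inl (Sum.inr p.2)) (fun p => Sum.inr p.2)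

/-- `K⃗_{m,n}`: the complete bipartite graph oriented from the class of size `m` to the
class of size `n`. -/
def oneDirK (m n : ℕ) : MultiDigraph where
  V := Fin m ⊕ Fin n
  E := Fin m × Fin n
  tail := fun p => Sum.inl p.1
  head := fun p => Sum.inr p.2

/-- A diamond: two hubs and `n` further vertices, each of which is either a source with its
two edges going to the hubs, or a sink with its two edges coming from the hubs
(`σ i = true` meaning `xᵢ` is a source). -/
def diamondD (n : ℕ) (σ : Fin n → Bool) : MultiDigraph where
  V := Fin n ⊕ Fin 2
  E := Fin n × Fin 2
  tail := fun p => if σ p.1 then Sum.inl p.1 else Sum.inr p.2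
  head := fun p => if σ p.1 then Sum.inr p.2 else Sum.inl p.1

/-- The bicycle `C⃡_k`: the cycle of length `k` with every edge replaced by a pair of
anti-parallel directed edges. -/
noncomputable def bicycle (k : ℕ) (hk : k ≠ 0) : MultiDigraph :=
  haveI : NeZero k := ⟨hk⟩
  { V := ZMod k
    E := ZMod k × Bool
    fv := inferInstance
    fe := inferInstance
    dv := inferInstance
    de := inferInstance
    tail := fun p => if p.2 then p.1 else p.1 + 1
    head := fun p => if p.2 then p.1 + 1 else p.1 }

/-- An odd diamond. -/
def IsOddDiamond (D : MultiDigraph) : Prop :=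
  ∃ (n : ℕ) (σ : Fin n → Bool), 3 ≤ n ∧ Odd (n + 2) ∧ IsIsomorphic D (diamondD n σ)

/-- An odd one-direction. -/
def IsOddOneDirection (D : MultiDigraph) : Prop :=
  ∃ m n : ℕ, 2 ≤ m ∧ 2 ≤ n ∧ Odd (m + n) ∧ IsIsomorphic D (oneDirK m n)

/-! ## Symmetric difference of a family of sets -/

/-- The symmetric difference of a finite family of sets. -/
def symmDiffFam {α : Type} {k : ℕ} (F : Fin k → Set α) : Set α :=
  {a | Odd ({i : Fin k | a ∈ F i}).ncard}

/-! ## Oriented matroids -/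

/-- Raw data of an oriented matroid: a finite ground set together with a collection of
signed subsets (encoded as functions to `SignType`). -/
structure PreOM : Type 1 where
  E : Type
  [fe : Fintype E]
  [de : DecidableEq E]
  circuits : Set (E → SignType)

attribute [instance] PreOM.fe PreOM.de

/-- The support of a signed set. -/
def sgnSupport {α : Type} (X : α → SignType) : Set α := {e | X e ≠ 0}

namespace PreOM

/-- The oriented matroid axioms for the collection of signed circuits. -/
def IsOM (M : PreOM) : Prop :=
  (0 : M.E → SignType) ∉ M.circuits ∧
  (∀ X ∈ M.circuits, -X ∈ M.circuits) ∧
  (∀ X ∈ M.circuits, ∀ Y ∈ M.circuits, sgnSupport X ⊆ sgnSupport Y → X = Y ∨ X = -Y) ∧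
  ∀ X ∈ M.circuits, ∀ Y ∈ M.circuits, X ≠ -Y → ∀ e : M.E, X e = 1 → Y e = -1 →
    ∃ Z ∈ M.circuits, (∀ f, Z f = 1 → f ≠ e ∧ (X f = 1 ∨ Y f = 1)) ∧
      ∀ f, Z f = -1 → f ≠ e ∧ (X f = -1 ∨ Y f = -1)

/-- The circuits of the underlying matroid: supports of signed circuits. -/
def UCircuits (M : PreOM) : Set (Set M.E) :=
  {C | ∃ X ∈ M.circuits, C = sgnSupport X}

/-- A directed circuit: the support of a signed circuit with empty negative part. -/
def IsDirectedCircuit (M : PreOM) (C : Set M.E) : Prop :=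
  ∃ X ∈ M.circuits, (∀ e, X e ≠ -1) ∧ C = {e | X e = 1}

/-- Independent sets of the underlying matroid. -/
def Indep (M : PreOM) (I : Set M.E) : Prop := ∀ C ∈ M.UCircuits, ¬ C ⊆ I

/-- Bases of the underlying matroid. -/
def IsBase (M : PreOM) (B : Set M.E) : Prop :=
  M.Indep B ∧ ∀ B', M.Indep B' → B ⊆ B' → B' = B

/-- Cocircuits of the underlying matroid: minimal sets meeting every base. -/
def IsCocircuit (M : PreOM) (S : Set M.E) : Prop :=
  (∀ B, M.IsBase B → (S ∩ B).Nonempty) ∧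
    ∀ S' : Set M.E, S' ⊂ S → ¬ ∀ B, M.IsBase B → (S' ∩ B).Nonempty

/-- Signed cocircuits: signed sets supported on a cocircuit and orthogonal to every
signed circuit. -/
def IsSignedCocircuit (M : PreOM) (Y : M.E → SignType) : Prop :=
  M.IsCocircuit (sgnSupport Y) ∧
    ∀ X ∈ M.circuits,
      ((∃ e, (Y e = 1 ∧ X e = 1) ∨ (Y e = -1 ∧ X e = -1)) ↔
        (∃ e, (Y e = 1 ∧ X e = -1) ∨ (Y e = -1 ∧ X e = 1)))

/-- An element `e` is butterfly-contractible if there is a cocircuit `S` with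
`(S \ {e}, {e})` a signed cocircuit. -/
def ButterflyContractible (M : PreOM) (e : M.E) : Prop :=
  ∃ Y : M.E → SignType, M.IsSignedCocircuit Y ∧ Y e = -1 ∧ ∀ f, f ≠ e → Y f ≠ -1

/-- Deletion of a set of elements. -/
noncomputable def deleteSet (M : PreOM) (A : Set M.E) : PreOM where
  E := {f : M.E // f ∉ A}
  fe := Fintype.ofFinite _
  de := Classical.decEq _
  circuits := {X : {f : M.E // f ∉ A} → SignType |
    ∃ X' ∈ M.circuits, (∀ a ∈ A, X' a = 0) ∧ ∀ f : {f : M.E // f ∉ A}, X f = X' f.1}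

/-- Contraction of a single element: signed circuits are the support-minimal nonempty
traces of signed circuits. -/
noncomputable def contractElem (M : PreOM) (e : M.E) : PreOM where
  E := {f : M.E // f ≠ e}
  fe := Fintype.ofFinite _
  de := Classical.decEq _
  circuits := {X : {f : M.E // f ≠ e} → SignType |
    X ≠ 0 ∧ ∃ X' ∈ M.circuits, (∀ f : {f : M.E // f ≠ e}, X f = X' f.1) ∧
      ¬ ∃ Z ∈ M.circuits, (sgnSupport Z \ {e}) ⊂ (sgnSupport X' \ {e})}

/-- Isomorphism of (pre-)oriented matroids. -/
def Iso (M N : PreOM) : Prop :=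
  ∃ σ : M.E ≃ N.E, ∀ X : N.E → SignType, X ∈ N.circuits ↔ (X ∘ σ) ∈ M.circuits

/-- A minimal dependent set of a vector configuration. -/
def IsMinimalDep {F : Type} [Field F] {n : ℕ} {E : Type} (φ : E → (Fin n → F))
    (C : Set E) : Prop :=
  ¬ LinearIndependent F (fun e : C => φ e.1) ∧
    ∀ C' : Set E, C' ⊂ C → LinearIndependent F (fun e : C' => φ e.1)

/-- The underlying matroid is regular: representable over every field. -/
def Regular (M : PreOM) : Prop :=
  ∀ (F : Type) [Field F], ∃ (n : ℕ) (φ : M.E → (Fin n → F)),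
    ∀ C : Set M.E, C ∈ M.UCircuits ↔ IsMinimalDep φ C

/-- `M` is non-even: its underlying matroid is regular and some set of elements meets
every directed circuit an odd number of times. -/
def NonEven (M : PreOM) : Prop :=
  M.Regular ∧ ∃ J : Set M.E, ∀ C : Set M.E, M.IsDirectedCircuit C → Odd (J ∩ C).ncard

/-- Totally cyclic: every element lies in a directed circuit. -/
def TotallyCyclic (M : PreOM) : Prop :=
  ∀ e : M.E, ∃ C : Set M.E, M.IsDirectedCircuit C ∧ e ∈ C

/-- Coindependent set: contains no cocircuit. -/
def Coindependent (M : PreOM) (A : Set M.E) : Prop :=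
  ∀ S : Set M.E, M.IsCocircuit S → ¬ S ⊆ A

/-- The circuit space of the underlying (binary) matroid, over `𝔽₂`. -/
noncomputable def circuitSpace (M : PreOM) : Submodule (ZMod 2) (M.E → ZMod 2) :=
  Submodule.span (ZMod 2) (eindicator '' M.UCircuits)

/-- A directed circuit basis: a family of directed circuits whose indicator vectors form a
basis of the circuit space. -/
noncomputable def IsDirectedCircuitBasis (M : PreOM) (ℬ : Set (Set M.E)) : Prop :=
  (∀ C ∈ ℬ, M.IsDirectedCircuit C) ∧
    LinearIndependent (ZMod 2) (fun C : ℬ => eindicator (C : Set M.E)) ∧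
    Submodule.span (ZMod 2) (eindicator '' ℬ) = M.circuitSpace

end PreOM

/-! ## GB-minors -/

/-- A single GB-minor step: deletion of an element, or contraction of a
butterfly-contractible element. -/
inductive GBStep : PreOM → PreOM → Prop
  | del (M : PreOM) (e : M.E) : GBStep (M.deleteSet {e}) M
  | con (M : PreOM) (e : M.E) (h : M.ButterflyContractible e) : GBStep (M.contractElem e) M

/-- `N` is a GB-minor of `M`. -/
def IsGBMinor (N M : PreOM) : Prop := ReflTransGen GBStep N M

/-! ## Oriented matroids from digraphs -/

/-- The oriented bond matroid `M*(D)` of a digraph `D`: signed circuits are the signed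
incidence vectors of the bonds of `D`. -/
def bondOM (D : MultiDigraph) : PreOM where
  E := D.E
  circuits := {X : D.E → SignType | ∃ W : Set D.V, D.IsBond (D.cutAt W) ∧
    ∀ e : D.E, (X e = 1 ↔ (D.tail e ∈ W ∧ D.head e ∉ W)) ∧
      (X e = -1 ↔ (D.head e ∈ W ∧ D.tail e ∉ W))}

/-- The oriented graphic matroid `M(D)` of a digraph `D`: signed circuits are the signed
incidence vectors of the cycles of the underlying multigraph of `D`. -/
def cycleOM (D : MultiDigraph) : PreOM where
  E := D.E
  circuits := {X : D.E → SignType | D.IsSignedCycle X}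



/-! ## Auxiliary development for Statement 13 -/

namespace Stmt13

open MultiDigraph

/-- Parity pairing of two `𝔽₂`-vectors. -/
noncomputable def pr {α : Type} [Fintype α] (u v : α → ZMod 2) : ZMod 2 :=
  ∑ e, u e * v e

lemma eind_one {α : Type} {S : Set α} {e : α} (h : e ∈ S) : eindicator S e = 1 :=
  Set.indicator_of_mem h 1

lemma eind_zero {α : Type} {S : Set α} {e : α} (h : e ∉ S) : eindicator S e = 0 :=
  Set.indicator_of_notMem h 1

lemma two_eq_zero : (2 : ZMod 2) = 0 := by decide

lemma natCast_eq_one_iff_odd (n : ℕ) : ((n : ZMod 2) = 1) ↔ Odd n := by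
  constructor
  · intro hcast
    rcases Nat.even_or_odd n with he | ho
    · exfalso
      obtain ⟨k, hk⟩ := he
      subst hk
      have : ((k + k : ℕ) : ZMod 2) = 0 := by
        push_cast
        exact CharTwo.add_self_eq_zero _
      rw [this] at hcast
      exact one_ne_zero hcast.symm
    · exact ho
  · intro ho
    obtain ⟨k, hk⟩ := ho
    subst hk
    push_cast
    rw [two_eq_zero]
    ring

lemma pr_eind {α : Type} [Fintype α] [DecidableEq α] (J S : Set α) :
    pr (eindicator J) (eindicator S) = ((J ∩ S).ncard : ZMod 2) := by
  classical
  have h1 : pr (eindicator J) (eindicator S)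
      = ∑ e, (if e ∈ J ∩ S then (1 : ZMod 2) else 0) := by
    unfold pr
    refine Finset.sum_congr rfl fun e _ => ?_
    by_cases hJ : e ∈ J <;> by_cases hS : e ∈ S <;>
      first
        | (rw [eind_one hJ, eind_one hS]; simp [Set.mem_inter_iff, hJ, hS])
        | (first
            | (rw [eind_zero hJ]; simp [Set.mem_inter_iff, hJ, hS])
            | (rw [eind_zero hS]; simp [Set.mem_inter_iff, hJ, hS]))
  rw [h1, Finset.sum_boole]
  congr 1
  rw [Set.ncard_eq_toFinset_card']
  congr 1
  ext e
  simp

lemma odd_pr_iff {α : Type} [Fintype α] [DecidableEq α] (J S : Set α) :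
    Odd (J ∩ S).ncard ↔ pr (eindicator J) (eindicator S) = 1 := by
  rw [pr_eind, natCast_eq_one_iff_odd]

lemma pr_add_right {α : Type} [Fintype α] (u v w : α → ZMod 2) :
    pr u (v + w) = pr u v + pr u w := by
  unfold pr
  rw [← Finset.sum_add_distrib]
  refine Finset.sum_congr rfl fun e _ => ?_
  simp [Pi.add_apply, mul_add]

lemma pr_zero_right {α : Type} [Fintype α] (u : α → ZMod 2) : pr u 0 = 0 := by
  unfold pr; simp

lemma pr_list_sum {α : Type} [Fintype α] (u : α → ZMod 2) (l : List (α → ZMod 2)) :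
    pr u l.sum = (l.map (pr u)).sum := by
  induction l with
  | nil => simpa using pr_zero_right u
  | cons x t ih => simp [List.sum_cons, pr_add_right, ih]

/-- Sum of a constant-one list. -/
lemma list_sum_ones (l : List (ZMod 2)) (h : ∀ x ∈ l, x = 1) :
    l.sum = (l.length : ZMod 2) := by
  induction l with
  | nil => simp
  | cons x t ih =>
      simp only [List.sum_cons, List.length_cons]
      rw [h x (by simp), ih (fun y hy => h y (by simp [hy]))]
      push_cast
      ring

end Stmt13

namespace Stmt13

open MultiDigraph

variable {D : MultiDigraph}

/-- The `𝔽₂` boundary map: vertex vector to edge vector. -/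
noncomputable def cv (D : MultiDigraph) (y : D.V → ZMod 2) : D.E → ZMod 2 :=
  fun e => y (D.tail e) + y (D.head e)

lemma cv_add (y z : D.V → ZMod 2) : cv D (y + z) = cv D y + cv D z := by
  funext e; simp only [cv, Pi.add_apply]; ring

lemma oneone : (1 + 1 : ZMod 2) = 0 := by decide

lemma eind_cutAt (Y : Set D.V) :
    eindicator (D.cutAt Y) = cv D (eindicator Y) := by
  funext e
  simp only [cv]
  by_cases ht : D.tail e ∈ Y <;> by_cases hh : D.head e ∈ Y
  · have hnot : e ∉ D.cutAt Y := by
      intro hmem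
      rcases hmem with ⟨_, h2⟩ | ⟨h1, _⟩
      · exact h2 hh
      · exact h1 ht
    rw [eind_zero hnot, eind_one ht, eind_one hh, oneone]
  · rw [eind_one (show e ∈ D.cutAt Y from Or.inl ⟨ht, hh⟩), eind_one ht, eind_zero hh, add_zero]
  · rw [eind_one (show e ∈ D.cutAt Y from Or.inr ⟨ht, hh⟩), eind_zero ht, eind_one hh, zero_add]
  · have hnot : e ∉ D.cutAt Y := by
      intro hmem
      rcases hmem with ⟨h1, _⟩ | ⟨_, h2⟩
      · exact ht h1
      · exact hh h2
    rw [eind_zero hnot, eind_zero ht, eind_zero hh, add_zero]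

lemma mem_cutAt_iff_cv {Y : Set D.V} {e : D.E} :
    e ∈ D.cutAt Y ↔ cv D (eindicator Y) e = 1 := by
  rw [← eind_cutAt]
  constructor
  · intro h; exact eind_one h
  · intro h
    by_contra hmem
    rw [eind_zero hmem] at h
    exact one_ne_zero h.symm

/-- Complement has the same cut. -/
lemma cutAt_compl (Y : Set D.V) : D.cutAt Yᶜ = D.cutAt Y := by
  ext e
  simp only [cutAt, Set.mem_setOf_eq, Set.mem_compl_iff, not_not]
  tauto

/-- Indicator of difference of nested sets. -/
lemma eind_diff_of_subset {α : Type} {C Y : Set α} (h : C ⊆ Y) :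
    eindicator (Y \ C) = eindicator Y + eindicator C := by
  funext x
  simp only [Pi.add_apply]
  by_cases hC : x ∈ C
  · rw [eind_zero (fun hx => hx.2 hC), eind_one (h hC), eind_one hC, oneone]
  · by_cases hY : x ∈ Y
    · rw [eind_one (show x ∈ Y \ C from ⟨hY, hC⟩), eind_one hY, eind_zero hC, add_zero]
    · rw [eind_zero (fun hx => hY hx.1), eind_zero hY, eind_zero hC, add_zero]

/-- `ind (X∩Wᶜ) + ind (Xᶜ∩Wᶜ) = ind Wᶜ`. -/
lemma eind_inter_compl_add {α : Type} (X W : Set α) :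
    eindicator (X ∩ Wᶜ) + eindicator (Xᶜ ∩ Wᶜ) = eindicator Wᶜ := by
  funext x
  simp only [Pi.add_apply]
  by_cases hX : x ∈ X <;> by_cases hW : x ∈ W
  · rw [eind_zero (fun h : x ∈ X ∩ Wᶜ => h.2 hW),
      eind_zero (fun h : x ∈ Xᶜ ∩ Wᶜ => h.1 hX), eind_zero (show x ∉ Wᶜ from fun h => h hW), add_zero]
  · rw [eind_one (show x ∈ X ∩ Wᶜ from ⟨hX, hW⟩), eind_zero (fun h : x ∈ Xᶜ ∩ Wᶜ => h.1 hX),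
      eind_one (show x ∈ Wᶜ from hW), add_zero]
  · rw [eind_zero (fun h : x ∈ X ∩ Wᶜ => h.2 hW), eind_zero (fun h : x ∈ Xᶜ ∩ Wᶜ => h.2 hW),
      eind_zero (show x ∉ Wᶜ from fun h => h hW), add_zero]
  · rw [eind_zero (fun h : x ∈ X ∩ Wᶜ => hX h.1), eind_one (show x ∈ Xᶜ ∩ Wᶜ from ⟨hX, hW⟩),
      eind_one (show x ∈ Wᶜ from hW), zero_add]

/-- `cv` of the complement indicator equals `cv` of the indicator. -/
lemma cv_eind_compl (W : Set D.V) :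
    cv D (eindicator Wᶜ) = cv D (eindicator W) := by
  rw [← eind_cutAt, ← eind_cutAt, cutAt_compl]

end Stmt13

namespace Stmt13

open MultiDigraph

variable {D : MultiDigraph}

lemma mem_cutAt {Y : Set D.V} {e : D.E} :
    e ∈ D.cutAt Y ↔ ((D.tail e ∈ Y ∧ D.head e ∉ Y) ∨ (D.tail e ∉ Y ∧ D.head e ∈ Y)) :=
  Iff.rfl

/-- In a directed cut, every edge of the cut leaves `Y`. -/
lemma mem_dicut {Y : Set D.V} (hdir : ∀ e : D.E, ¬(D.tail e ∉ Y ∧ D.head e ∈ Y)) {e : D.E} :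
    e ∈ D.cutAt Y ↔ (D.tail e ∈ Y ∧ D.head e ∉ Y) := by
  rw [mem_cutAt]
  have := hdir e
  tauto

lemma eind_empty {α : Type} : eindicator (∅ : Set α) = 0 := by
  funext x; exact eind_zero (by simp)

lemma add_self_fun {α : Type} (u : α → ZMod 2) : u + u = 0 := by
  funext x; exact CharTwo.add_self_eq_zero _

lemma eind_split {α : Type} {T P Q : Set α} (hQ : Q = T \ P) (hP : P ⊆ T) :
    eindicator T = eindicator P + eindicator Q := by
  subst hQ
  rw [eind_diff_of_subset hP]
  funext x
  simp only [Pi.add_apply]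
  rw [add_comm (eindicator T x) (eindicator P x), ← add_assoc]
  rw [CharTwo.add_self_eq_zero (eindicator P x), zero_add]

lemma ncard_le_cardV (Y : Set D.V) : Y.ncard ≤ Fintype.card D.V := by
  have := Set.ncard_le_ncard (Set.subset_univ Y) (Set.toFinite _)
  simpa [Set.ncard_univ, Nat.card_eq_fintype_card] using this

/-- Every directed cut is (as an `𝔽₂` sum) a disjoint union of directed bonds
contained in it. -/
lemma dicut_decomp (D : MultiDigraph) :
    ∀ (n : ℕ) (Y : Set D.V),
      (D.cutAt Y).ncard * (Fintype.card D.V + 1) + Y.ncard ≤ n →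
      (∀ e : D.E, ¬(D.tail e ∉ Y ∧ D.head e ∈ Y)) →
      ∃ L : List (Set D.E), (∀ β ∈ L, D.IsDirectedBond β ∧ β ⊆ D.cutAt Y) ∧
        (L.map eindicator).sum = eindicator (D.cutAt Y) := by
  intro n
  induction n with
  | zero =>
      intro Y hm _
      have h0 : (D.cutAt Y).ncard * (Fintype.card D.V + 1) = 0 := by omega
      have hc : (D.cutAt Y).ncard = 0 := by
        rcases Nat.mul_eq_zero.mp h0 with h | h
        · exact h
        · omega
      have hempty : D.cutAt Y = ∅ := ((Set.ncard_eq_zero (Set.toFinite _)).mp hc)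
      exact ⟨[], by simp, by simp [hempty, eind_empty]⟩
  | succ n ih =>
      intro Y hm hdir
      by_cases hempty : D.cutAt Y = ∅
      · exact ⟨[], by simp, by simp [hempty, eind_empty]⟩
      by_cases hbond : D.IsBond (D.cutAt Y)
      · refine ⟨[D.cutAt Y], ?_, by simp⟩
        intro β hβ
        simp only [List.mem_singleton] at hβ
        subst hβ
        exact ⟨⟨hbond, Set.nonempty_iff_ne_empty.mpr hempty, Y, rfl, hdir⟩, subset_rfl⟩
      -- not a bond: find a proper nonempty subcut
      have hcut : D.IsCut (D.cutAt Y) := ⟨Set.nonempty_iff_ne_empty.mpr hempty, Y, rfl⟩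
      have hex : ∃ S', D.IsCut S' ∧ S' ⊆ D.cutAt Y ∧ S' ≠ D.cutAt Y := by
        by_contra hno
        push_neg at hno
        exact hbond ⟨hcut, fun S' hS' hsub => hno S' hS' hsub⟩
      obtain ⟨S', ⟨hSne, Z, rfl⟩, hsub, hne⟩ := hex
      -- basic facts
      have hTedge : ∀ e ∈ D.cutAt Y, D.tail e ∈ Y ∧ D.head e ∉ Y :=
        fun e he => (mem_dicut hdir).mp he
      have hZedge : ∀ e ∈ D.cutAt Z, D.tail e ∈ Y ∧ D.head e ∉ Y :=
        fun e he => hTedge e (hsub he)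
      have hTfin : (D.cutAt Y).Finite := Set.toFinite _
      have hZssub : D.cutAt Z ⊂ D.cutAt Y := ⟨hsub, fun h => hne (le_antisymm hsub h)⟩
      have hZlt : (D.cutAt Z).ncard < (D.cutAt Y).ncard := Set.ncard_lt_ncard hZssub hTfin
      -- helper for recursion measure
      have hrec : ∀ Y' : Set D.V, (D.cutAt Y').ncard < (D.cutAt Y).ncard →
          (D.cutAt Y').ncard * (Fintype.card D.V + 1) + Y'.ncard ≤ n := by
        intro Y' hlt
        have h1 : Y'.ncard ≤ Fintype.card D.V := ncard_le_cardV Y'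
        have h2 : (D.cutAt Y').ncard + 1 ≤ (D.cutAt Y).ncard := hlt
        nlinarith [hm]
      by_cases hYZ : Y ∩ Z = ∅
      · -- Case A : all edges of cutAt Z go from Y into Z
        have hZY : ∀ v, v ∈ Y → v ∉ Z := by
          intro v hv hvZ
          exact absurd (Set.mem_inter hv hvZ) (by simp [hYZ])
        have hZin : ∀ e ∈ D.cutAt Z, D.tail e ∈ Y ∧ D.head e ∈ Z := by
          intro e he
          obtain ⟨ht, hh⟩ := hZedge e he
          rcases he with ⟨htZ, hhZ⟩ | ⟨htZ, hhZ⟩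
          · exact absurd htZ (hZY _ ht)
          · exact ⟨ht, hhZ⟩
        -- cutAt Z is directed at Zᶜ
        have hdirZ : ∀ e : D.E, ¬(D.tail e ∉ (Zᶜ : Set D.V) ∧ D.head e ∈ (Zᶜ : Set D.V)) := by
          intro e ⟨htc, hhc⟩
          simp only [Set.mem_compl_iff, not_not] at htc hhc
          have heZ : e ∈ D.cutAt Z := Or.inl ⟨htc, hhc⟩
          exact (hZY _ (hZin e heZ).1) htc
        -- Q := cutAt (Y ∪ Z) = cutAt Y \ cutAt Z
        have hQeq : D.cutAt (Y ∪ Z) = D.cutAt Y \ D.cutAt Z := by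
          ext e
          constructor
          · intro he
            rcases he with ⟨ht, hh⟩ | ⟨ht, hh⟩
            · simp only [Set.mem_union, not_or] at ht hh
              rcases ht with htY | htZ
              · have heT : e ∈ D.cutAt Y := Or.inl ⟨htY, hh.1⟩
                refine ⟨heT, fun heZ => ?_⟩
                exact hh.2 (hZin e heZ).2
              · have heZ : e ∈ D.cutAt Z := Or.inl ⟨htZ, hh.2⟩
                exact absurd htZ (hZY _ (hZin e heZ).1)
            · simp only [Set.mem_union, not_or] at ht hh
              rcases hh with hhY | hhZ
              · exact absurd ⟨ht.1, hhY⟩ (hdir e)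
              · have heZ : e ∈ D.cutAt Z := Or.inr ⟨ht.2, hhZ⟩
                exact absurd (hZin e heZ).1 ht.1
          · intro ⟨heT, heZ⟩
            obtain ⟨ht, hh⟩ := hTedge e heT
            have htZ : D.tail e ∉ Z := hZY _ ht
            have hhZ : D.head e ∉ Z := fun hhZ => heZ (Or.inr ⟨htZ, hhZ⟩)
            exact Or.inl ⟨Or.inl ht, fun hcon => hcon.elim hh hhZ⟩
        have hQsub : D.cutAt (Y ∪ Z) ⊆ D.cutAt Y := by rw [hQeq]; exact Set.diff_subset
        have hdirQ : ∀ e : D.E, ¬(D.tail e ∉ (Y ∪ Z : Set D.V) ∧ D.head e ∈ (Y ∪ Z : Set D.V)) := by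
          intro e ⟨ht, hh⟩
          simp only [Set.mem_union, not_or] at ht hh
          rcases hh with hhY | hhZ
          · exact hdir e ⟨ht.1, hhY⟩
          · have heZ : e ∈ D.cutAt Z := Or.inr ⟨ht.2, hhZ⟩
            exact ht.1 (hZin e heZ).1
        have hQlt : (D.cutAt (Y ∪ Z)).ncard < (D.cutAt Y).ncard := by
          apply Set.ncard_lt_ncard _ hTfin
          rw [hQeq]
          refine ⟨Set.diff_subset, fun hsup => ?_⟩
          obtain ⟨e, he⟩ := hSne
          exact ((hsup (hsub he)).2 he)
        -- cutAt Zᶜ = cutAt Z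
        have hZc : D.cutAt (Zᶜ : Set D.V) = D.cutAt Z := cutAt_compl Z
        have hZclt : (D.cutAt (Zᶜ : Set D.V)).ncard < (D.cutAt Y).ncard := by rw [hZc]; exact hZlt
        obtain ⟨L₁, hL₁, hs₁⟩ := ih (Zᶜ) (hrec _ hZclt) hdirZ
        obtain ⟨L₂, hL₂, hs₂⟩ := ih (Y ∪ Z) (hrec _ hQlt) hdirQ
        refine ⟨L₁ ++ L₂, ?_, ?_⟩
        · intro β hβ
          rcases List.mem_append.mp hβ with hβ | hβ
          · exact ⟨(hL₁ β hβ).1, ((hL₁ β hβ).2.trans (by rw [hZc])).trans hsub⟩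
          · exact ⟨(hL₂ β hβ).1, (hL₂ β hβ).2.trans hQsub⟩
        · rw [List.map_append, List.sum_append, hs₁, hs₂, hZc,
            eind_split (T := D.cutAt Y) (P := D.cutAt Z) (Q := D.cutAt (Y ∪ Z)) hQeq hsub]
      by_cases hYsubZ : Y ⊆ Z
      · -- Case B : Y ⊆ Z
        have hZout : ∀ e ∈ D.cutAt Z, D.tail e ∈ Y ∧ D.head e ∉ Z := by
          intro e he
          obtain ⟨ht, hh⟩ := hZedge e he
          rcases he with ⟨htZ, hhZ⟩ | ⟨htZ, hhZ⟩
          · exact ⟨ht, hhZ⟩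
          · exact absurd (hYsubZ ht) htZ
        have hdirZ : ∀ e : D.E, ¬(D.tail e ∉ Z ∧ D.head e ∈ Z) := by
          intro e ⟨ht, hh⟩
          have heZ : e ∈ D.cutAt Z := Or.inr ⟨ht, hh⟩
          exact ht (hYsubZ (hZout e heZ).1)
        -- Q := cutAt (Z \ Y) = cutAt Y \ cutAt Z
        have hQeq : D.cutAt (Z \ Y) = D.cutAt Y \ D.cutAt Z := by
          ext e
          constructor
          · intro he
            rcases he with ⟨ht, hh⟩ | ⟨ht, hh⟩
            · -- tail ∈ Z \ Y, head ∉ Z \ Y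
              by_cases hhY : D.head e ∈ Y
              · exact absurd ⟨ht.2, hhY⟩ (hdir e)
              · have hhZ : D.head e ∉ Z := fun hhZ => hh ⟨hhZ, hhY⟩
                have heZ : e ∈ D.cutAt Z := Or.inl ⟨ht.1, hhZ⟩
                exact absurd (hZout e heZ).1 ht.2
            · -- head ∈ Z \ Y, tail ∉ Z \ Y
              by_cases htY : D.tail e ∈ Y
              · refine ⟨Or.inl ⟨htY, hh.2⟩, fun heZ => ?_⟩
                exact (hZout e heZ).2 hh.1
              · by_cases htZ : D.tail e ∈ Z
                · exact absurd ⟨htZ, htY⟩ ht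
                · have heZ : e ∈ D.cutAt Z := Or.inr ⟨htZ, hh.1⟩
                  exact absurd (hZout e heZ).1 htY
          · intro ⟨heT, heZ⟩
            obtain ⟨ht, hh⟩ := hTedge e heT
            have htZ : D.tail e ∈ Z := hYsubZ ht
            have hhZ : D.head e ∈ Z := by
              by_contra hhZ
              exact heZ (Or.inl ⟨htZ, hhZ⟩)
            exact Or.inr ⟨fun hcon => hcon.2 ht, ⟨hhZ, hh⟩⟩
        have hQsub : D.cutAt (Z \ Y) ⊆ D.cutAt Y := by rw [hQeq]; exact Set.diff_subset
        have hdirQ : ∀ e : D.E, ¬(D.tail e ∉ ((Z \ Y)ᶜ : Set D.V) ∧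
            D.head e ∈ ((Z \ Y)ᶜ : Set D.V)) := by
          intro e ⟨ht, hh⟩
          simp only [Set.mem_compl_iff, not_not] at ht hh
          have heQ : e ∈ D.cutAt (Z \ Y) := Or.inl ⟨ht, hh⟩
          rw [hQeq] at heQ
          exact absurd (hTedge e heQ.1).1 (fun hY => ht.2 hY)
        have hQlt : (D.cutAt ((Z \ Y)ᶜ : Set D.V)).ncard < (D.cutAt Y).ncard := by
          rw [cutAt_compl]
          apply Set.ncard_lt_ncard _ hTfin
          rw [hQeq]
          refine ⟨Set.diff_subset, fun hsup => ?_⟩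
          obtain ⟨e, he⟩ := hSne
          exact ((hsup (hsub he)).2 he)
        obtain ⟨L₁, hL₁, hs₁⟩ := ih Z (hrec _ hZlt) hdirZ
        obtain ⟨L₂, hL₂, hs₂⟩ := ih ((Z \ Y)ᶜ) (hrec _ hQlt) hdirQ
        refine ⟨L₁ ++ L₂, ?_, ?_⟩
        · intro β hβ
          rcases List.mem_append.mp hβ with hβ | hβ
          · exact ⟨(hL₁ β hβ).1, (hL₁ β hβ).2.trans hsub⟩
          · exact ⟨(hL₂ β hβ).1, ((hL₂ β hβ).2.trans (by rw [cutAt_compl])).trans hQsub⟩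
        · rw [List.map_append, List.sum_append, hs₁, hs₂, cutAt_compl,
            eind_split (T := D.cutAt Y) (P := D.cutAt Z) (Q := D.cutAt (Z \ Y)) hQeq hsub]
      · -- Case C : Y ∩ Z ∉ {∅, Y}
        have hP1sub : D.cutAt (Y ∩ Z) ⊆ D.cutAt Y := by
          intro e he
          rcases he with ⟨ht, hh⟩ | ⟨ht, hh⟩
          · by_cases hhY : D.head e ∈ Y
            · have hhZ : D.head e ∉ Z := fun hhZ => hh ⟨hhY, hhZ⟩
              have heZ : e ∈ D.cutAt Z := Or.inl ⟨ht.2, hhZ⟩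
              exact absurd hhY (hTedge e (hsub heZ)).2
            · exact Or.inl ⟨ht.1, hhY⟩
          · by_cases htY : D.tail e ∈ Y
            · have htZ : D.tail e ∉ Z := fun htZ => ht ⟨htY, htZ⟩
              have heZ : e ∈ D.cutAt Z := Or.inr ⟨htZ, hh.2⟩
              exact absurd htY (fun _ => (hTedge e (hsub heZ)).2 hh.1)
            · exact absurd ⟨htY, hh.1⟩ (hdir e)
        have hdirP1 : ∀ e : D.E, ¬(D.tail e ∉ (Y ∩ Z : Set D.V) ∧ D.head e ∈ (Y ∩ Z : Set D.V)) := by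
          intro e ⟨ht, hh⟩
          have heP : e ∈ D.cutAt (Y ∩ Z) := Or.inr ⟨ht, hh⟩
          exact (hTedge e (hP1sub heP)).2 hh.1
        have hP2sub : D.cutAt (Y \ Z) ⊆ D.cutAt Y := by
          intro e he
          rcases he with ⟨ht, hh⟩ | ⟨ht, hh⟩
          · by_cases hhY : D.head e ∈ Y
            · have hhZ : D.head e ∈ Z := by
                by_contra hhZ
                exact hh ⟨hhY, hhZ⟩
              have heZ : e ∈ D.cutAt Z := Or.inr ⟨ht.2, hhZ⟩
              exact absurd hhY (hTedge e (hsub heZ)).2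
            · exact Or.inl ⟨ht.1, hhY⟩
          · by_cases htY : D.tail e ∈ Y
            · have htZ : D.tail e ∈ Z := by
                by_contra htZ
                exact ht ⟨htY, htZ⟩
              have heZ : e ∈ D.cutAt Z := Or.inl ⟨htZ, hh.2⟩
              exact absurd hh.1 (hTedge e (hsub heZ)).2
            · exact absurd ⟨htY, hh.1⟩ (hdir e)
        have hdirP2 : ∀ e : D.E, ¬(D.tail e ∉ (Y \ Z : Set D.V) ∧ D.head e ∈ (Y \ Z : Set D.V)) := by
          intro e ⟨ht, hh⟩
          have heP : e ∈ D.cutAt (Y \ Z) := Or.inr ⟨ht, hh⟩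
          exact (hTedge e (hP2sub heP)).2 hh.1
        -- partition : T = cutAt (Y∩Z) ⊎ cutAt (Y\Z)
        have hunion : D.cutAt Y = D.cutAt (Y ∩ Z) ∪ D.cutAt (Y \ Z) := by
          apply Set.Subset.antisymm
          · intro e he
            obtain ⟨ht, hh⟩ := hTedge e he
            by_cases htZ : D.tail e ∈ Z
            · exact Or.inl (Or.inl ⟨⟨ht, htZ⟩, fun hc => hh hc.1⟩)
            · exact Or.inr (Or.inl ⟨⟨ht, htZ⟩, fun hc => hh hc.1⟩)
          · exact Set.union_subset hP1sub hP2sub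
        have hdisj : D.cutAt (Y ∩ Z) ∩ D.cutAt (Y \ Z) = ∅ := by
          ext e
          simp only [Set.mem_inter_iff, Set.mem_empty_iff_false, iff_false, not_and]
          intro h1 h2
          have e1 := (mem_dicut hdirP1).mp h1
          have e2 := (mem_dicut hdirP2).mp h2
          exact e2.1.2 e1.1.2
        have hQeqC : D.cutAt (Y \ Z) = D.cutAt Y \ D.cutAt (Y ∩ Z) := by
          rw [hunion]
          apply Set.Subset.antisymm
          · intro e he
            refine ⟨Or.inr he, fun hc => ?_⟩
            have : e ∈ D.cutAt (Y ∩ Z) ∩ D.cutAt (Y \ Z) := ⟨hc, he⟩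
            rw [hdisj] at this
            exact this
          · rintro e ⟨he | he, hne⟩
            · exact absurd he hne
            · exact he
        by_cases hP2e : D.cutAt (Y \ Z) = ∅
        · -- T = cutAt (Y ∩ Z); recurse on smaller vertex set
          have hTeq : D.cutAt Y = D.cutAt (Y ∩ Z) := by
            rw [hunion, hP2e, Set.union_empty]
          have hYlt : (Y ∩ Z).ncard < Y.ncard := by
            apply Set.ncard_lt_ncard _ (Set.toFinite _)
            refine ⟨Set.inter_subset_left, fun hsup => hYsubZ ?_⟩
            intro y hy
            exact (hsup hy).2
          have hmeas : (D.cutAt (Y ∩ Z)).ncard * (Fintype.card D.V + 1) + (Y ∩ Z).ncard ≤ n := by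
            rw [← hTeq]
            omega
          obtain ⟨L, hL, hs⟩ := ih (Y ∩ Z) hmeas hdirP1
          exact ⟨L, fun β hβ => ⟨(hL β hβ).1, (hL β hβ).2.trans hP1sub⟩, by rw [hs, ← hTeq]⟩
        by_cases hP1e : D.cutAt (Y ∩ Z) = ∅
        · have hTeq : D.cutAt Y = D.cutAt (Y \ Z) := by
            rw [hunion, hP1e, Set.empty_union]
          have hYlt : (Y \ Z).ncard < Y.ncard := by
            apply Set.ncard_lt_ncard _ (Set.toFinite _)
            refine ⟨Set.diff_subset, fun hsup => ?_⟩
            obtain ⟨y, hy⟩ := Set.nonempty_iff_ne_empty.mpr hYZ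
            exact (hsup hy.1).2 hy.2
          have hmeas : (D.cutAt (Y \ Z)).ncard * (Fintype.card D.V + 1) + (Y \ Z).ncard ≤ n := by
            rw [← hTeq]
            omega
          obtain ⟨L, hL, hs⟩ := ih (Y \ Z) hmeas hdirP2
          exact ⟨L, fun β hβ => ⟨(hL β hβ).1, (hL β hβ).2.trans hP2sub⟩, by rw [hs, ← hTeq]⟩
        · -- both parts nonempty : recurse on both
          have hP1lt : (D.cutAt (Y ∩ Z)).ncard < (D.cutAt Y).ncard := by
            apply Set.ncard_lt_ncard _ hTfin
            refine ⟨hP1sub, fun hsup => ?_⟩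
            obtain ⟨e, he⟩ := Set.nonempty_iff_ne_empty.mpr hP2e
            have h1 : e ∈ D.cutAt (Y ∩ Z) := hsup (hP2sub he)
            have : e ∈ D.cutAt (Y ∩ Z) ∩ D.cutAt (Y \ Z) := ⟨h1, he⟩
            rw [hdisj] at this
            exact this
          have hP2lt : (D.cutAt (Y \ Z)).ncard < (D.cutAt Y).ncard := by
            apply Set.ncard_lt_ncard _ hTfin
            refine ⟨hP2sub, fun hsup => ?_⟩
            obtain ⟨e, he⟩ := Set.nonempty_iff_ne_empty.mpr hP1e
            have h2 : e ∈ D.cutAt (Y \ Z) := hsup (hP1sub he)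
            have : e ∈ D.cutAt (Y ∩ Z) ∩ D.cutAt (Y \ Z) := ⟨he, h2⟩
            rw [hdisj] at this
            exact this
          obtain ⟨L₁, hL₁, hs₁⟩ := ih (Y ∩ Z) (hrec _ hP1lt) hdirP1
          obtain ⟨L₂, hL₂, hs₂⟩ := ih (Y \ Z) (hrec _ hP2lt) hdirP2
          refine ⟨L₁ ++ L₂, ?_, ?_⟩
          · intro β hβ
            rcases List.mem_append.mp hβ with hβ | hβ
            · exact ⟨(hL₁ β hβ).1, (hL₁ β hβ).2.trans hP1sub⟩
            · exact ⟨(hL₂ β hβ).1, (hL₂ β hβ).2.trans hP2sub⟩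
          · rw [List.map_append, List.sum_append, hs₁, hs₂,
              eind_split (T := D.cutAt Y) (P := D.cutAt (Y ∩ Z)) (Q := D.cutAt (Y \ Z))
                hQeqC hP1sub]

end Stmt13

namespace Stmt13

open MultiDigraph

variable {D : MultiDigraph}

/-- A loop edge cannot belong to a forest. -/
lemma forest_no_loop {A₀ : Set D.E} (hf : D.IsForestOn A₀) {e : D.E} (he : e ∈ A₀) :
    D.tail e ≠ D.head e := by
  intro hloop
  apply hf
  classical
  refine ⟨fun f => if f = e then 1 else 0, ⟨1, one_pos, fun _ => D.tail e, fun _ => e,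
    fun _ => true, Function.injective_of_subsingleton _, Function.injective_of_subsingleton _,
    ?_, ?_, ?_⟩, ?_⟩
  · intro i
    refine ⟨fun _ => ⟨rfl, hloop.symm⟩, fun hfalse => by simp at hfalse⟩
  · intro i
    simp
  · intro f hf'
    show (if f = e then (1 : SignType) else 0) = 0
    rw [if_neg]
    intro hfe
    exact hf' 0 (by rw [hfe])
  · intro f hne'
    by_cases hfe : f = e
    · subst hfe; exact he
    · exfalso
      apply hne'
      show (if f = e then (1 : SignType) else 0) = 0
      rw [if_neg hfe]

/-- Turn a reflexive-transitive chain into a list walk. -/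
lemma rtg_to_chain {α : Type} {r : α → α → Prop} {a b : α} (h : Relation.ReflTransGen r a b) :
    ∃ l : List α, List.Chain r a l ∧ (a :: l).getLast (by simp) = b := by
  induction h using Relation.ReflTransGen.head_induction_on with
  | refl => exact ⟨[], List.Chain.nil, rfl⟩
  | head hstep _ ih =>
      obtain ⟨l, hchain, hlast⟩ := ih
      rename_i x c _
      exact ⟨c :: l, List.Chain.cons hstep hchain, by rwa [List.getLast_cons (by simp)]⟩

/-- Extract a vertex-nodup walk from a walk. -/
lemma chain_nodup {α : Type} {r : α → α → Prop} :
    ∀ (n : ℕ) (l : List α) (a : α), l.length ≤ n → List.Chain r a l →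
    ∃ l' : List α, List.Chain r a l' ∧
      (a :: l').getLast (by simp) = (a :: l).getLast (by simp) ∧
      (∀ x ∈ l', x ∈ l) ∧ (a :: l').Nodup := by
  intro n
  induction n with
  | zero =>
      intro l a hlen _
      have : l = [] := List.eq_nil_of_length_eq_zero (by omega)
      subst this
      exact ⟨[], List.Chain.nil, rfl, by simp, by simp⟩
  | succ n ih =>
      intro l a hlen hchain
      classical
      by_cases hmem : a ∈ l
      · obtain ⟨s, u, hsu⟩ := List.append_of_mem hmem
        subst hsu
        have hchain2 : List.Chain r a u := (List.isChain_cons_split.mp hchain).2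
        have hulen : u.length ≤ n := by
          have := hlen
          simp only [List.length_append, List.length_cons] at this
          omega
        obtain ⟨l', hc', hl', hsub', hnd'⟩ := ih u a hulen hchain2
        refine ⟨l', hc', ?_, fun x hx => by simp [hsub' x hx], hnd'⟩
        have h2 : (a :: (s ++ a :: u)).getLast (by simp) = (a :: u).getLast (by simp) := by
          rw [List.getLast_cons (by simp : s ++ a :: u ≠ []), List.getLast_append]
          simp
        exact hl'.trans h2.symm
      · cases l with
        | nil => exact ⟨[], List.Chain.nil, rfl, by simp, by simp⟩
        | cons b t =>
            have hchain2 : List.Chain r b t := (List.chain_cons.mp hchain).2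
            have htlen : t.length ≤ n := by
              simp only [List.length_cons] at hlen
              omega
            obtain ⟨t', hc', hl', hsub', hnd'⟩ := ih t b htlen hchain2
            refine ⟨b :: t', List.Chain.cons (List.chain_cons.mp hchain).1 hc', ?_, ?_, ?_⟩
            · rw [List.getLast_cons (l := b :: t') (by simp),
                List.getLast_cons (l := b :: t) (by simp)]
              exact hl'
            · intro x hx
              rcases List.mem_cons.mp hx with hx | hx
              · simp [hx]
              · simp [hsub' x hx]
            · rw [List.nodup_cons]
              refine ⟨?_, hnd'⟩
              intro hax
              rcases List.mem_cons.mp hax with hax | hax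
              · exact hmem (by simp [hax])
              · exact hmem (by simp [hsub' _ hax])

/-- Step extraction from a chain. -/
lemma chain_get_step {α : Type} {r : α → α → Prop} {a : α} {l : List α}
    (h : List.Chain r a l) :
    ∀ (i : ℕ) (hi : i + 1 < (a :: l).length),
      r ((a :: l).get ⟨i, by omega⟩) ((a :: l).get ⟨i + 1, hi⟩) := by
  intro i hi
  exact List.isChain_iff_getElem.mp h i hi

end Stmt13

namespace Stmt13

open MultiDigraph

variable {D : MultiDigraph}

lemma forest_no_return {A₀ : Set D.E} (hf : D.IsForestOn A₀) (e : D.E) (he : e ∈ A₀)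
    (σ : D.V → D.V → Prop)
    (hσ : ∀ x y, σ x y → ∃ f, f ∈ A₀ ∧
        ((D.tail f = x ∧ D.head f = y) ∨ (D.tail f = y ∧ D.head f = x)) ∧
          ¬(f = e ∧ D.tail f = y ∧ D.head f = x)) :
    ¬ Relation.ReflTransGen σ (D.head e) (D.tail e) := by
  intro hwalk
  classical
  have hne : D.tail e ≠ D.head e := forest_no_loop hf he
  obtain ⟨l₀, hchain₀, hlast₀⟩ := rtg_to_chain hwalk
  obtain ⟨l', hchain, hlast, _, hnodup⟩ :=
    chain_nodup l₀.length l₀ (D.head e) le_rfl hchain₀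
  have hlastl : (D.head e :: l').getLast (by simp) = D.tail e := hlast.trans hlast₀
  set l : List D.V := D.head e :: l' with hl
  set n := l.length with hn
  have hn1 : 1 ≤ n := by rw [hn, hl]; simp
  have hn2 : 2 ≤ n := by
    by_contra hcon
    have hn1' : n = 1 := by omega
    have hl'nil : l' = [] := by
      have : l'.length = 0 := by
        have := hn1'
        rw [hn, hl] at this
        simpa using this
      exact List.eq_nil_of_length_eq_zero this
    rw [hl'nil] at hlastl
    simp at hlastl
    exact hne (hlastl ▸ rfl)
  haveI : NeZero n := ⟨by omega⟩
  haveI : Fact (1 < n) := ⟨by omega⟩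
  have hstep : ∀ (i : ℕ) (hi : i + 1 < n), σ (l.get ⟨i, by omega⟩) (l.get ⟨i + 1, hi⟩) := by
    intro i hi
    exact chain_get_step hchain i hi
  have hchoice : ∀ (i : ℕ) (hi : i + 1 < n), ∃ f, f ∈ A₀ ∧
      ((D.tail f = l.get ⟨i, by omega⟩ ∧ D.head f = l.get ⟨i + 1, hi⟩) ∨
        (D.tail f = l.get ⟨i + 1, hi⟩ ∧ D.head f = l.get ⟨i, by omega⟩)) ∧
      ¬(f = e ∧ D.tail f = l.get ⟨i + 1, hi⟩ ∧ D.head f = l.get ⟨i, by omega⟩) := by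
    intro i hi
    exact hσ _ _ (hstep i hi)
  choose F hFmem hFjoin hFnb using hchoice
  have hgetinj : ∀ (i j : ℕ) (hi : i < n) (hj : j < n),
      l.get ⟨i, hi⟩ = l.get ⟨j, hj⟩ → i = j := by
    intro i j hi hj hg
    have := (List.Nodup.get_inj_iff hnodup).mp hg
    simpa using this
  have hlastget : l.get ⟨n - 1, by omega⟩ = D.tail e := by
    exact (List.getLast_eq_getElem (l := l) (by rw [hl]; simp)).symm.trans hlastl
  have hfirstget : l.get ⟨0, by omega⟩ = D.head e := rfl
  have hval1 : (1 : ZMod n).val = 1 := ZMod.val_one n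
  have hvadd : ∀ i : ZMod n, (i + 1).val = (i.val + 1) % n := by
    intro i; rw [ZMod.val_add, hval1]
  have hvsucc : ∀ i : ZMod n, i.val + 1 < n → (i + 1).val = i.val + 1 := by
    intro i hi; rw [hvadd]; exact Nat.mod_eq_of_lt hi
  have hvwrap : ∀ i : ZMod n, ¬(i.val + 1 < n) → (i + 1).val = 0 := by
    intro i hi
    have hival : i.val = n - 1 := by have := ZMod.val_lt i; omega
    rw [hvadd, hival]
    have hplus : n - 1 + 1 = n := by omega
    rw [hplus, Nat.mod_self]
  have hFne : ∀ (i : ℕ) (hi : i + 1 < n), F i hi ≠ e := by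
    intro i hi hFe
    rcases hFjoin i hi with ⟨ht, _⟩ | ⟨ht, hh⟩
    · rw [hFe] at ht
      have h1 : (n : ℕ) - 1 = i := hgetinj _ _ (by omega) (by omega) (by rw [hlastget, ht])
      omega
    · exact hFnb i hi ⟨hFe, ht, hh⟩
  have hFinj : ∀ (i j : ℕ) (hi : i + 1 < n) (hj : j + 1 < n), F i hi = F j hj → i = j := by
    intro i j hi hj hFF
    rcases hFjoin i hi with ⟨ht1, hh1⟩ | ⟨ht1, hh1⟩ <;>
      rcases hFjoin j hj with ⟨ht2, hh2⟩ | ⟨ht2, hh2⟩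
    · exact hgetinj _ _ (by omega) (by omega) (by rw [← ht1, hFF, ht2])
    · have e1 : i = j + 1 := hgetinj _ _ (by omega) (by omega) (by rw [← ht1, hFF, ht2])
      have e2 : i + 1 = j := hgetinj _ _ (by omega) (by omega) (by rw [← hh1, hFF, hh2])
      omega
    · have e1 : i + 1 = j := hgetinj _ _ (by omega) (by omega) (by rw [← ht1, hFF, ht2])
      have e2 : i = j + 1 := hgetinj _ _ (by omega) (by omega) (by rw [← hh1, hFF, hh2])
      omega
    · have e1 : i + 1 = j + 1 := hgetinj _ _ (by omega) (by omega) (by rw [← ht1, hFF, ht2])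
      omega
  set vZ : ZMod n → D.V := fun i => l.get ⟨i.val, ZMod.val_lt i⟩ with hvZ
  set edZ : ZMod n → D.E :=
    fun i => if h : i.val + 1 < n then F i.val h else e with hedZ
  set dirZ : ZMod n → Bool := fun i =>
    if h : i.val + 1 < n then
      (if D.tail (F i.val h) = l.get ⟨i.val, by omega⟩ then true else false)
    else true with hdirZ
  have hvinj : Function.Injective vZ := by
    intro i j hij
    simp only [hvZ] at hij
    exact ZMod.val_injective n (hgetinj _ _ _ _ hij)
  have hedinj : Function.Injective edZ := by
    intro i j hij
    simp only [hedZ] at hij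
    by_cases hi : i.val + 1 < n <;> by_cases hj : j.val + 1 < n
    · rw [dif_pos hi, dif_pos hj] at hij
      exact ZMod.val_injective n (hFinj _ _ hi hj hij)
    · rw [dif_pos hi, dif_neg hj] at hij
      exact absurd hij (hFne _ _)
    · rw [dif_neg hi, dif_pos hj] at hij
      exact absurd hij.symm (hFne _ _)
    · have h1 := ZMod.val_lt i
      have h2 := ZMod.val_lt j
      apply ZMod.val_injective
      omega
  have hvsuccget : ∀ (i : ZMod n) (hi : i.val + 1 < n), vZ (i + 1) = l.get ⟨i.val + 1, hi⟩ := by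
    intro i hi
    simp only [hvZ]
    congr 1
    exact Fin.ext (hvsucc i hi)
  have hcond : ∀ i : ZMod n,
      (dirZ i = true → D.tail (edZ i) = vZ i ∧ D.head (edZ i) = vZ (i + 1)) ∧
      (dirZ i = false → D.tail (edZ i) = vZ (i + 1) ∧ D.head (edZ i) = vZ i) := by
    intro i
    by_cases hi : i.val + 1 < n
    · have hvplus := hvsuccget i hi
      have hedi : edZ i = F i.val hi := by simp only [hedZ]; exact dif_pos hi
      have hvi : vZ i = l.get ⟨i.val, by omega⟩ := by simp only [hvZ]
      constructor
      · intro hdir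
        simp only [hdirZ] at hdir
        rw [dif_pos hi] at hdir
        by_cases hT : D.tail (F i.val hi) = l.get ⟨i.val, by omega⟩
        · rcases hFjoin i.val hi with ⟨ht, hh⟩ | ⟨ht, hh⟩
          · exact ⟨by rw [hedi, hvi]; exact ht, by rw [hedi, hvplus]; exact hh⟩
          · exfalso
            have : (i.val : ℕ) = i.val + 1 :=
              hgetinj _ _ (by omega) (by omega) (by rw [← hT, ht])
            omega
        · rw [if_neg hT] at hdir
          exact absurd hdir (by simp)
      · intro hdir
        simp only [hdirZ] at hdir
        rw [dif_pos hi] at hdir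
        by_cases hT : D.tail (F i.val hi) = l.get ⟨i.val, by omega⟩
        · rw [if_pos hT] at hdir
          exact absurd hdir (by simp)
        · rcases hFjoin i.val hi with ⟨ht, hh⟩ | ⟨ht, hh⟩
          · exact absurd ht hT
          · exact ⟨by rw [hedi, hvplus]; exact ht, by rw [hedi, hvi]; exact hh⟩
    · have hedi : edZ i = e := by rw [hedZ]; exact dif_neg hi
      have hival : i.val = n - 1 := by have := ZMod.val_lt i; omega
      have hvi : vZ i = D.tail e := by
        simp only [hvZ]
        have : l.get ⟨i.val, ZMod.val_lt i⟩ = l.get ⟨n - 1, by omega⟩ := by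
          congr 1
          exact Fin.ext hival
        rw [this, hlastget]
      have hvp : vZ (i + 1) = D.head e := by
        simp only [hvZ]
        have : l.get ⟨(i + 1).val, ZMod.val_lt _⟩ = l.get ⟨0, by omega⟩ := by
          congr 1
          exact Fin.ext (hvwrap i hi)
        rw [this, hfirstget]
      constructor
      · intro _
        exact ⟨by rw [hedi, hvi], by rw [hedi, hvp]⟩
      · intro hdir
        simp only [hdirZ] at hdir
        rw [dif_neg hi] at hdir
        exact absurd hdir (by simp)
  apply hf
  refine ⟨fun g => if h : ∃ i : ZMod n, edZ i = g then (if dirZ h.choose then 1 else -1) else 0,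
    ⟨n, by omega, vZ, edZ, dirZ, hvinj, hedinj, hcond, ?_, ?_⟩, ?_⟩
  · intro i
    have hex : ∃ j, edZ j = edZ i := ⟨i, rfl⟩
    have hch : hex.choose = i := hedinj hex.choose_spec
    simp only [dif_pos hex, hch]
  · intro g hg
    exact dif_neg (fun hcon => hcon.elim (fun i hi => hg i hi))
  · intro g hXg
    by_cases hex : ∃ i : ZMod n, edZ i = g
    · obtain ⟨i, hi⟩ := hex
      rw [← hi]
      simp only [hedZ]
      by_cases hi2 : i.val + 1 < n
      · rw [dif_pos hi2]; exact hFmem _ _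
      · rw [dif_neg hi2]; exact he
    · exact absurd (dif_neg hex) hXg

end Stmt13

namespace Stmt13

open MultiDigraph Relation

variable {D : MultiDigraph}

/-- Mixed walk step: forward over any edge outside `A'`, both ways over edges of `A'`. -/
def mstep (D : MultiDigraph) (A' : Set D.E) : D.V → D.V → Prop := fun x y =>
  ∃ f : D.E, (f ∉ A' ∧ D.tail f = x ∧ D.head f = y) ∨
    (f ∈ A' ∧ ((D.tail f = x ∧ D.head f = y) ∨ (D.tail f = y ∧ D.head f = x)))

/-- Every edge gives a forward mixed step. -/
lemma mstep_of_edge (A' : Set D.E) (f : D.E) : mstep D A' (D.tail f) (D.head f) := by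
  classical
  by_cases hf : f ∈ A'
  · exact ⟨f, Or.inr ⟨hf, Or.inl ⟨rfl, rfl⟩⟩⟩
  · exact ⟨f, Or.inl ⟨hf, rfl, rfl⟩⟩

/-- The no-return property `(∗)`. -/
def StarP (D : MultiDigraph) (A' : Set D.E) : Prop :=
  ∀ e : D.E, e ∉ A' → ¬ ReflTransGen (mstep D A') (D.head e) (D.tail e)

/-- Classmates (EqvGen of touching) are mutually mixed-reachable. -/
lemma classmate {A' : Set D.E} {x y : D.V} (h : EqvGen (D.touchRel A') x y) :
    ReflTransGen (mstep D A') x y ∧ ReflTransGen (mstep D A') y x := by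
  induction h with
  | rel a b hab =>
      obtain ⟨f, hf, hta, hhb⟩ := hab
      constructor
      · exact ReflTransGen.single ⟨f, Or.inr ⟨hf, Or.inl ⟨hta, hhb⟩⟩⟩
      · exact ReflTransGen.single ⟨f, Or.inr ⟨hf, Or.inr ⟨hta, hhb⟩⟩⟩
  | refl => exact ⟨ReflTransGen.refl, ReflTransGen.refl⟩
  | symm a b _ ih => exact ⟨ih.2, ih.1⟩
  | trans a b c _ _ ih₁ ih₂ => exact ⟨ih₁.1.trans ih₂.1, ih₂.2.trans ih₁.2⟩

/-- Quotient map into a contraction. -/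
noncomputable def qm (D : MultiDigraph) (A₀ : Set D.E) (v : D.V) : (D.contract A₀).V :=
  Quotient.mk (EqvGen.setoid (D.touchRel A₀)) v

lemma qm_eq_of_eqvgen {A₀ : Set D.E} {x y : D.V} (h : EqvGen (D.touchRel A₀) x y) :
    qm D A₀ x = qm D A₀ y := Quotient.sound h

lemma qm_eq_of_touch {A₀ : Set D.E} {f : D.E} (hf : f ∈ A₀) :
    qm D A₀ (D.tail f) = qm D A₀ (D.head f) :=
  qm_eq_of_eqvgen (EqvGen.rel _ _ ⟨f, hf, rfl, rfl⟩)

lemma contract_tail_eq (A₀ : Set D.E) (f : (D.contract A₀).E) :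
    (D.contract A₀).tail f = qm D A₀ (D.tail f.1) := rfl

lemma contract_head_eq (A₀ : Set D.E) (f : (D.contract A₀).E) :
    (D.contract A₀).head f = qm D A₀ (D.head f.1) := rfl

/-- A dstep in the contraction from an uncontracted edge. -/
lemma contract_dstep {A₀ : Set D.E} {f : D.E} (hf : f ∉ A₀) :
    (D.contract A₀).dstep (qm D A₀ (D.tail f)) (qm D A₀ (D.head f)) :=
  ⟨⟨f, hf⟩, rfl, rfl⟩

section Region

variable {A₁ A₂ : Set D.E} {X : Set D.V}

/-- Step within a region. -/
def stepR (D : MultiDigraph) (A' : Set D.E) (R : Set D.V) : D.V → D.V → Prop :=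
  fun x y => mstep D A' x y ∧ x ∈ R ∧ y ∈ R

/-- Once a mixed walk leaves `X` it cannot return. -/
lemma mstep_no_return
    (hdircut : ∀ e : D.E, ¬(D.tail e ∉ X ∧ D.head e ∈ X))
    {A' : Set D.E}
    (hsided : ∀ f ∈ A', (D.tail f ∈ X ∧ D.head f ∈ X) ∨ (D.tail f ∉ X ∧ D.head f ∉ X)) :
    ∀ x y, mstep D A' x y → x ∉ X → y ∉ X := by
  rintro x y ⟨f, ⟨hf, hta, hhb⟩ | ⟨hf, ⟨hta, hhb⟩ | ⟨hta, hhb⟩⟩⟩ hx hy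
  · exact hdircut f ⟨hta ▸ hx, hhb ▸ hy⟩
  · rcases hsided f hf with ⟨h1, _⟩ | ⟨_, h2⟩
    · exact hx (show x ∈ X from hta ▸ h1)
    · exact (show y ∉ X from hhb ▸ h2) hy
  · rcases hsided f hf with ⟨_, h2⟩ | ⟨h1, _⟩
    · exact hx (show x ∈ X from hhb ▸ h2)
    · exact (show y ∉ X from hta ▸ h1) hy

lemma stay_out {A' : Set D.E} (hnc : ∀ x y, mstep D A' x y → x ∉ X → y ∉ X)
    {u w : D.V} (h : ReflTransGen (mstep D A') u w) (hu : u ∉ X) : w ∉ X := by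
  induction h with
  | refl => exact hu
  | tail _ hstep ih => exact hnc _ _ hstep ih

lemma restrict_in {A' : Set D.E} (hnc : ∀ x y, mstep D A' x y → x ∉ X → y ∉ X)
    {u w : D.V} (h : ReflTransGen (mstep D A') u w) (hu : u ∈ X) (hw : w ∈ X) :
    ReflTransGen (stepR D A' X) u w := by
  induction h using Relation.ReflTransGen.head_induction_on with
  | refl => exact ReflTransGen.refl
  | head hstep hrest ih =>
      rename_i a c
      by_cases hc : c ∈ X
      · exact ReflTransGen.head ⟨hstep, hu, hc⟩ (ih hc)
      · exact absurd (stay_out hnc hrest hc) (fun hcon => hcon hw)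

lemma restrict_out {A' : Set D.E} (hnc : ∀ x y, mstep D A' x y → x ∉ X → y ∉ X)
    {u w : D.V} (h : ReflTransGen (mstep D A') u w) (hu : u ∉ X) :
    ReflTransGen (stepR D A' (Xᶜ : Set D.V)) u w := by
  induction h using Relation.ReflTransGen.head_induction_on with
  | refl => exact ReflTransGen.refl
  | head hstep hrest ih =>
      rename_i a c
      have hc : c ∉ X := hnc _ _ hstep hu
      exact ReflTransGen.head ⟨hstep, hu, hc⟩ (ih hc)

/-- Steps inside the region using only `A₀`-edges (backwards only allowed for `A'`-edges). -/
def astep (D : MultiDigraph) (A' A₀ : Set D.E) : D.V → D.V → Prop := fun x y =>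
  ∃ f, f ∈ A₀ ∧ ((D.tail f = x ∧ D.head f = y) ∨
    (f ∈ A' ∧ D.tail f = y ∧ D.head f = x))

/-- Split a region walk: either all steps use `A₀`-edges, or some step uses a
non-`A₀` edge forwards. -/
lemma walk_split {A' A₀ : Set D.E} {R : Set D.V}
    (hC : ∀ f ∈ A', (D.tail f ∈ R ∨ D.head f ∈ R) → f ∈ A₀) :
    ∀ {u w : D.V}, ReflTransGen (stepR D A' R) u w →
    ReflTransGen (astep D A' A₀) u w ∨
      ∃ f, f ∉ A₀ ∧ D.tail f ∈ R ∧ D.head f ∈ R ∧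
        ReflTransGen (stepR D A' R) u (D.tail f) ∧
        ReflTransGen (stepR D A' R) (D.head f) w := by
  intro u w h
  classical
  induction h using Relation.ReflTransGen.head_induction_on with
  | refl => exact Or.inl ReflTransGen.refl
  | head hstep hrest ih =>
      rename_i a c
      obtain ⟨⟨f, hf⟩, haR, hcR⟩ := hstep
      rcases hf with ⟨hfA', hta, hhc⟩ | ⟨hfA', hj⟩
      · -- forward step over f ∉ A'
        by_cases hfA₀ : f ∈ A₀
        · -- an A₀-step
          have hastep : astep D A' A₀ a c := ⟨f, hfA₀, Or.inl ⟨hta, hhc⟩⟩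
          rcases ih with ih | ⟨g, hg, hgt, hgh, hw1, hw2⟩
          · exact Or.inl (ReflTransGen.head hastep ih)
          · exact Or.inr ⟨g, hg, hgt, hgh,
              ReflTransGen.head ⟨⟨f, Or.inl ⟨hfA', hta, hhc⟩⟩, haR, hcR⟩ hw1, hw2⟩
        · -- pivot
          exact Or.inr ⟨f, hfA₀, hta ▸ haR, hhc ▸ hcR, hta ▸ ReflTransGen.refl, hhc ▸ hrest⟩
      · -- step over f ∈ A' : must be an A₀-edge by hC
        have hfA₀ : f ∈ A₀ := by
          apply hC f hfA'
          rcases hj with ⟨hta, _⟩ | ⟨_, hhb⟩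
          · exact Or.inl (hta ▸ haR)
          · exact Or.inr (hhb ▸ haR)
        have hastep : astep D A' A₀ a c := by
          rcases hj with ⟨hta, hhc⟩ | ⟨hta, hhc⟩
          · exact ⟨f, hfA₀, Or.inl ⟨hta, hhc⟩⟩
          · exact ⟨f, hfA₀, Or.inr ⟨hfA', hta, hhc⟩⟩
        rcases ih with ih | ⟨g, hg, hgt, hgh, hw1, hw2⟩
        · exact Or.inl (ReflTransGen.head hastep ih)
        · exact Or.inr ⟨g, hg, hgt, hgh,
            ReflTransGen.head ⟨⟨f, Or.inr ⟨hfA', hj⟩⟩, haR, hcR⟩ hw1, hw2⟩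

/-- Project an `A₀`-only walk to an equality of contraction classes. -/
lemma astep_project {A' A₀ : Set D.E} {u w : D.V}
    (h : ReflTransGen (astep D A' A₀) u w) : qm D A₀ u = qm D A₀ w := by
  induction h with
  | refl => rfl
  | tail _ hstep ih =>
      obtain ⟨f, hfA₀, hj⟩ := hstep
      rcases hj with ⟨hta, hhb⟩ | ⟨_, hta, hhb⟩
      · refine ih.trans ?_
        rw [← hta, ← hhb]
        exact qm_eq_of_touch hfA₀
      · refine ih.trans ?_
        rw [← hta, ← hhb]
        exact (qm_eq_of_touch hfA₀).symm

/-- Project a region walk to a dstep walk in the contraction. -/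
lemma stepR_project {A' A₀ : Set D.E} {R : Set D.V}
    (hC : ∀ f ∈ A', (D.tail f ∈ R ∨ D.head f ∈ R) → f ∈ A₀)
    {u w : D.V} (h : ReflTransGen (stepR D A' R) u w) :
    ReflTransGen ((D.contract A₀).dstep) (qm D A₀ u) (qm D A₀ w) := by
  classical
  induction h with
  | refl => exact ReflTransGen.refl
  | tail _ hstep ih =>
      rename_i b c _
      obtain ⟨⟨f, hf⟩, haR, hcR⟩ := hstep
      rcases hf with ⟨hfA', hta, hhc⟩ | ⟨hfA', hj⟩
      · by_cases hfA₀ : f ∈ A₀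
        · have heq : qm D A₀ b = qm D A₀ c := by
            rw [← hta, ← hhc]
            exact qm_eq_of_touch hfA₀
          exact heq ▸ ih
        · refine ih.trans (ReflTransGen.single ?_)
          rw [← hta, ← hhc]
          exact contract_dstep hfA₀
      · have hfA₀ : f ∈ A₀ := by
          apply hC f hfA'
          rcases hj with ⟨hta, _⟩ | ⟨_, hhb⟩
          · exact Or.inl (hta ▸ haR)
          · exact Or.inr (hhb ▸ haR)
        rcases hj with ⟨hta, hhc⟩ | ⟨hta, hhc⟩
        · have heq : qm D A₀ b = qm D A₀ c := by
            rw [← hta, ← hhc]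
            exact qm_eq_of_touch hfA₀
          exact heq ▸ ih
        · have heq : qm D A₀ b = qm D A₀ c := by
            rw [← hta, ← hhc]
            exact (qm_eq_of_touch hfA₀).symm
          exact heq ▸ ih

/-- Core region argument: a mixed walk from head to tail inside a region is impossible. -/
lemma star_region_core {A' A₀ : Set D.E} {R : Set D.V}
    (hf₀ : D.IsForestOn A₀) (hac₀ : (D.contract A₀).Acyclic)
    (hC : ∀ f ∈ A', (D.tail f ∈ R ∨ D.head f ∈ R) → f ∈ A₀)
    {e : D.E} (heA' : e ∉ A')
    (hwalkR : ReflTransGen (stepR D A' R) (D.head e) (D.tail e)) : False := by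
  classical
  rcases walk_split hC hwalkR with hall | ⟨f₀, hf₀A₀, htR, hhR, hw1, hw2⟩
  · -- all steps via A₀-edges
    by_cases heA₀ : e ∈ A₀
    · -- forest contradiction
      apply forest_no_return hf₀ e heA₀ (astep D A' A₀) _ hall
      intro x y hxy
      obtain ⟨f, hfA₀, hj⟩ := hxy
      refine ⟨f, hfA₀, ?_, ?_⟩
      · rcases hj with ⟨hta, hhb⟩ | ⟨_, hta, hhb⟩
        · exact Or.inl ⟨hta, hhb⟩
        · exact Or.inr ⟨hta, hhb⟩
      · rintro ⟨hfe, hty, hhx⟩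
        rcases hj with ⟨hta, hhb⟩ | ⟨hfA', _, _⟩
        · -- forward usage and backward equations force a loop
          have hloop : D.tail f = D.head f := hta.trans hhx.symm
          have hfA₀' : f ∈ A₀ := by rw [hfe]; exact heA₀
          exact forest_no_loop hf₀ hfA₀' hloop
        · exact heA' (hfe ▸ hfA')
    · -- e ∉ A₀ : project to equality, then a dstep-loop in the contraction
      have heq := astep_project hall
      have hdst : (D.contract A₀).dstep (qm D A₀ (D.tail e)) (qm D A₀ (D.head e)) :=
        contract_dstep heA₀
      rw [heq] at hdst
      exact hac₀ _ _ hdst ReflTransGen.refl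
  · -- pivot : contradiction with acyclicity of the contraction
    have hp1 := stepR_project hC hw1
    have hp2 := stepR_project hC hw2
    by_cases heA₀ : e ∈ A₀
    · have heq : qm D A₀ (D.tail e) = qm D A₀ (D.head e) := qm_eq_of_touch heA₀
      have : ReflTransGen ((D.contract A₀).dstep)
          (qm D A₀ (D.head f₀)) (qm D A₀ (D.tail f₀)) := by
        refine hp2.trans ?_
        rw [heq]
        exact hp1
      exact hac₀ _ _ (contract_dstep hf₀A₀) this
    · have hde : (D.contract A₀).dstep (qm D A₀ (D.tail e)) (qm D A₀ (D.head e)) :=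
        contract_dstep heA₀
      have : ReflTransGen ((D.contract A₀).dstep)
          (qm D A₀ (D.head f₀)) (qm D A₀ (D.tail f₀)) :=
        (hp2.trans (ReflTransGen.single hde)).trans hp1
      exact hac₀ _ _ (contract_dstep hf₀A₀) this

end Region

end Stmt13

namespace Stmt13

open MultiDigraph Relation

variable {D : MultiDigraph}

lemma StarP_of {A₁ A₂ : Set D.E} {X : Set D.V}
    (hf₁ : D.IsForestOn A₁) (hf₂ : D.IsForestOn A₂)
    (hac₁ : (D.contract A₁).Acyclic) (hac₂ : (D.contract A₂).Acyclic)
    (hdircut : ∀ e : D.E, ¬(D.tail e ∉ X ∧ D.head e ∈ X))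
    (hA₁ : ∀ e ∈ A₁, D.tail e ∈ X ∧ D.head e ∈ X)
    (hA₂ : ∀ e ∈ A₂, D.tail e ∉ X ∧ D.head e ∉ X)
    (A' : Set D.E)
    (hC1 : ∀ f ∈ A', (D.tail f ∈ X ∨ D.head f ∈ X) → f ∈ A₁)
    (hC2 : ∀ f ∈ A', (D.tail f ∉ X ∨ D.head f ∉ X) → f ∈ A₂) :
    StarP D A' := by
  classical
  have hsided : ∀ f ∈ A', (D.tail f ∈ X ∧ D.head f ∈ X) ∨ (D.tail f ∉ X ∧ D.head f ∉ X) := by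
    intro f hf
    by_cases ht : D.tail f ∈ X
    · exact Or.inl (hA₁ f (hC1 f hf (Or.inl ht)))
    · exact Or.inr (hA₂ f (hC2 f hf (Or.inl ht)))
  have hnc := mstep_no_return hdircut hsided
  intro e heA' hwalk
  by_cases hte : D.tail e ∈ X <;> by_cases hhe : D.head e ∈ X
  · exact star_region_core hf₁ hac₁ hC1 heA' (restrict_in hnc hwalk hhe hte)
  · exact (stay_out hnc hwalk hhe) hte
  · exact hdircut e ⟨hte, hhe⟩
  · refine star_region_core hf₂ hac₂ ?_ heA' (restrict_out hnc hwalk hhe)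
    intro f hf hor
    apply hC2 f hf
    rcases hor with h | h
    · exact Or.inl h
    · exact Or.inr h

/-- I5 : every cut avoiding `A'` is an `𝔽₂`-sum of directed bonds avoiding `A'`,
provided the no-return property holds for `A'`. -/
lemma rep_cut (D : MultiDigraph) (A' : Set D.E) (hstar : StarP D A') :
    ∀ (n : ℕ) (Y : Set D.V), Y.ncard ≤ n →
      (∀ f ∈ A', f ∉ D.cutAt Y) →
      ∃ L : List (Set D.E), (∀ β ∈ L, D.IsDirectedBond β ∧ β ∩ A' = ∅) ∧
        (L.map eindicator).sum = eindicator (D.cutAt Y) := by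
  intro n
  induction n with
  | zero =>
      intro Y hY _
      have : Y = ∅ := (Set.ncard_eq_zero (Set.toFinite _)).mp (by omega)
      subst this
      have hcut : D.cutAt (∅ : Set D.V) = ∅ := by
        ext e
        simp [cutAt]
      exact ⟨[], by simp, by simp [hcut, eind_empty]⟩
  | succ n ih =>
      intro Y hYn hY
      classical
      rcases Set.eq_empty_or_nonempty Y with rfl | ⟨v, hv⟩
      · have hcut : D.cutAt (∅ : Set D.V) = ∅ := by
          ext e
          simp [cutAt]
        exact ⟨[], by simp, by simp [hcut, eind_empty]⟩
      have hiffY : ∀ f ∈ A', (D.tail f ∈ Y ↔ D.head f ∈ Y) := by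
        intro f hf
        have := hY f hf
        simp only [cutAt, Set.mem_setOf_eq] at this
        tauto
      set C : Set D.V := {w | EqvGen (D.touchRel A') w v} with hC
      have hvC : v ∈ C := EqvGen.refl v
      have hiffEq : ∀ x y, EqvGen (D.touchRel A') x y → (x ∈ Y ↔ y ∈ Y) := by
        intro x y hxy
        induction hxy with
        | rel a b hab =>
            obtain ⟨f, hf, hta, hhb⟩ := hab
            rw [← hta, ← hhb]
            exact hiffY f hf
        | refl => exact Iff.rfl
        | symm a b _ ihab => exact ihab.symm
        | trans a b c _ _ ih₁ ih₂ => exact ih₁.trans ih₂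
      have hCY : C ⊆ Y := by
        intro w hw
        exact (hiffEq w v hw).mpr hv
      set L₁ : Set D.V := {w | ReflTransGen (mstep D A') w v} with hL₁
      have hCL₁ : C ⊆ L₁ := fun w hw => (classmate hw).1
      have hdir₁ : ∀ e : D.E, ¬(D.tail e ∉ L₁ ∧ D.head e ∈ L₁) := by
        rintro e ⟨ht, hh⟩
        exact ht (ReflTransGen.head (mstep_of_edge A' e) hh)
      have havoid₁ : ∀ f ∈ A', f ∉ D.cutAt L₁ := by
        intro f hf hcross
        have hcl : EqvGen (D.touchRel A') (D.tail f) (D.head f) :=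
          EqvGen.rel _ _ ⟨f, hf, rfl, rfl⟩
        rcases hcross with ⟨ht, hh⟩ | ⟨ht, hh⟩
        · exact hh ((classmate hcl).2.trans ht)
        · exact ht ((classmate hcl).1.trans hh)
      set L₂ : Set D.V := L₁ \ C with hL₂
      have hdir₂ : ∀ e : D.E, ¬(D.tail e ∉ L₂ ∧ D.head e ∈ L₂) := by
        rintro e ⟨ht, hh⟩
        obtain ⟨hhL₁, hhC⟩ := hh
        have htL₁ : D.tail e ∈ L₁ := ReflTransGen.head (mstep_of_edge A' e) hhL₁
        by_cases htC : D.tail e ∈ C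
        · by_cases heA' : e ∈ A'
          · have hcl : EqvGen (D.touchRel A') (D.tail e) (D.head e) :=
              EqvGen.rel _ _ ⟨e, heA', rfl, rfl⟩
            exact hhC (EqvGen.trans _ _ _ (EqvGen.symm _ _ hcl) htC)
          · exact hstar e heA' (hhL₁.trans (classmate htC).2)
        · exact ht ⟨htL₁, htC⟩
      have havoid₂ : ∀ f ∈ A', f ∉ D.cutAt L₂ := by
        intro f hf hcross
        have hcl : EqvGen (D.touchRel A') (D.tail f) (D.head f) :=
          EqvGen.rel _ _ ⟨f, hf, rfl, rfl⟩
        have hiffL : D.tail f ∈ L₁ ↔ D.head f ∈ L₁ :=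
          ⟨fun h => (classmate hcl).2.trans h, fun h => (classmate hcl).1.trans h⟩
        have hiffC : D.tail f ∈ C ↔ D.head f ∈ C :=
          ⟨fun h => EqvGen.trans _ _ _ (EqvGen.symm _ _ hcl) h,
            fun h => EqvGen.trans _ _ _ hcl h⟩
        rcases hcross with ⟨ht, hh⟩ | ⟨ht, hh⟩
        · rcases ht with ⟨h1, h2⟩
          exact hh ⟨hiffL.mp h1, fun hc => h2 (hiffC.mpr hc)⟩
        · rcases hh with ⟨h1, h2⟩
          exact ht ⟨hiffL.mpr h1, fun hc => h2 (hiffC.mp hc)⟩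
      obtain ⟨P₁, hP₁, hs₁⟩ := dicut_decomp D
        ((D.cutAt L₁).ncard * (Fintype.card D.V + 1) + L₁.ncard) L₁ le_rfl hdir₁
      obtain ⟨P₂, hP₂, hs₂⟩ := dicut_decomp D
        ((D.cutAt L₂).ncard * (Fintype.card D.V + 1) + L₂.ncard) L₂ le_rfl hdir₂
      have hYC : ∀ f ∈ A', f ∉ D.cutAt (Y \ C) := by
        intro f hf hcross
        have hiffC : D.tail f ∈ C ↔ D.head f ∈ C :=
          ⟨fun h => EqvGen.trans _ _ _
            (EqvGen.symm _ _ (EqvGen.rel _ _ ⟨f, hf, rfl, rfl⟩)) h,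
            fun h => EqvGen.trans _ _ _ (EqvGen.rel _ _ ⟨f, hf, rfl, rfl⟩) h⟩
        rcases hcross with ⟨ht, hh⟩ | ⟨ht, hh⟩
        · rcases ht with ⟨h1, h2⟩
          exact hh ⟨(hiffY f hf).mp h1, fun hc => h2 (hiffC.mpr hc)⟩
        · rcases hh with ⟨h1, h2⟩
          exact ht ⟨(hiffY f hf).mpr h1, fun hc => h2 (hiffC.mp hc)⟩
      have hYClt : (Y \ C).ncard ≤ n := by
        have : (Y \ C).ncard < Y.ncard := by
          apply Set.ncard_lt_ncard _ (Set.toFinite _)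
          exact ⟨Set.diff_subset, fun hsup => ((hsup hv).2 hvC)⟩
        omega
      obtain ⟨P₃, hP₃, hs₃⟩ := ih (Y \ C) hYClt hYC
      refine ⟨P₁ ++ P₂ ++ P₃, ?_, ?_⟩
      · intro β hβ
        rcases List.mem_append.mp hβ with hβ | hβ
        · rcases List.mem_append.mp hβ with hβ | hβ
          · refine ⟨(hP₁ β hβ).1, Set.eq_empty_iff_forall_notMem.mpr fun g hg => ?_⟩
            exact havoid₁ g hg.2 ((hP₁ β hβ).2 hg.1)
          · refine ⟨(hP₂ β hβ).1, Set.eq_empty_iff_forall_notMem.mpr fun g hg => ?_⟩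
            exact havoid₂ g hg.2 ((hP₂ β hβ).2 hg.1)
        · exact hP₃ β hβ
      · rw [List.map_append, List.sum_append, List.map_append, List.sum_append,
          hs₁, hs₂, hs₃]
        -- vector identity
        have hind : eindicator Y = eindicator (Y \ C) + eindicator L₁ + eindicator L₂ := by
          funext x
          simp only [Pi.add_apply]
          by_cases hxC : x ∈ C
          · rw [eind_zero (fun hx : x ∈ Y \ C => hx.2 hxC), eind_one (hCY hxC),
              eind_one (hCL₁ hxC), eind_zero (fun hx : x ∈ L₂ => hx.2 hxC)]
            decide
          · by_cases hxY : x ∈ Y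
            · rw [eind_one hxY, eind_one (show x ∈ Y \ C from ⟨hxY, hxC⟩)]
              by_cases hxL : x ∈ L₁
              · rw [eind_one hxL, eind_one (show x ∈ L₂ from ⟨hxL, hxC⟩)]
                decide
              · rw [eind_zero hxL, eind_zero (fun hx : x ∈ L₂ => hxL hx.1)]
                decide
            · rw [eind_zero hxY, eind_zero (fun hx : x ∈ Y \ C => hxY hx.1)]
              by_cases hxL : x ∈ L₁
              · rw [eind_one hxL, eind_one (show x ∈ L₂ from ⟨hxL, hxC⟩)]
                decide
              · rw [eind_zero hxL, eind_zero (fun hx : x ∈ L₂ => hxL hx.1)]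
                decide
        rw [eind_cutAt, eind_cutAt, eind_cutAt, eind_cutAt, hind, cv_add, cv_add]
        abel

end Stmt13

namespace Stmt13

open MultiDigraph Relation

variable {D : MultiDigraph}

lemma eqvgen_single {a : D.E} {x y : D.V} :
    EqvGen (D.touchRel ({a} : Set D.E)) x y ↔
      x = y ∨ (x = D.tail a ∧ y = D.head a) ∨ (x = D.head a ∧ y = D.tail a) := by
  constructor
  · intro h
    induction h with
    | rel u v huv =>
        obtain ⟨f, hf, htu, hhv⟩ := huv
        rw [Set.mem_singleton_iff] at hf
        subst hf
        exact Or.inr (Or.inl ⟨htu.symm, hhv.symm⟩)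
    | refl => exact Or.inl rfl
    | symm u v _ ih =>
        rcases ih with rfl | ⟨h1, h2⟩ | ⟨h1, h2⟩
        · exact Or.inl rfl
        · exact Or.inr (Or.inr ⟨h2, h1⟩)
        · exact Or.inr (Or.inl ⟨h2, h1⟩)
    | trans u v w _ _ ih₁ ih₂ =>
        rcases ih₁ with rfl | ⟨h1, h2⟩ | ⟨h1, h2⟩
        · exact ih₂
        · rcases ih₂ with rfl | ⟨h3, h4⟩ | ⟨h3, h4⟩
          · exact Or.inr (Or.inl ⟨h1, h2⟩)
          · rw [h2] at h3
            exact Or.inl (by rw [h1]; exact h3.symm.trans h4.symm)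
          · exact Or.inl (by rw [h1, h4])
        · rcases ih₂ with rfl | ⟨h3, h4⟩ | ⟨h3, h4⟩
          · exact Or.inr (Or.inr ⟨h1, h2⟩)
          · exact Or.inl (by rw [h1, h4])
          · rw [h2] at h3
            exact Or.inl (by rw [h1]; exact h3.symm.trans h4.symm)
  · intro h
    rcases h with rfl | ⟨h1, h2⟩ | ⟨h1, h2⟩
    · exact EqvGen.refl x
    · exact EqvGen.rel _ _ ⟨a, rfl, h1.symm, h2.symm⟩
    · exact EqvGen.symm _ _ (EqvGen.rel _ _ ⟨a, rfl, h2.symm, h1.symm⟩)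

/-- From minimality : for every non-loop edge `a`, a set meeting all `a`-avoiding
directed bonds oddly. -/
lemma exists_Ja (h : MinimalObstruction D) {a : D.E} (hnl : D.tail a ≠ D.head a) :
    ∃ J : Set D.E, ∀ β : Set D.E, D.IsDirectedBond β → a ∉ β →
      pr (eindicator J) (eindicator β) = 1 := by
  classical
  set D' := D.contract ({a} : Set D.E) with hD'
  have hminor : IsCutMinor D' D := ReflTransGen.single (CutMinorStep.contractEdge D a)
  have hqm_eq : qm D ({a} : Set D.E) (D.tail a) = qm D ({a} : Set D.E) (D.head a) :=
    qm_eq_of_touch rfl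
  have hnotiso : ¬ IsIsomorphic D' D := by
    rintro ⟨iso⟩
    letI : Fintype D'.V := D'.fv
    have hcard : Fintype.card D'.V = Fintype.card D.V := Fintype.card_congr iso.vmap
    have hsurj : Function.Surjective (qm D ({a} : Set D.E)) := by
      intro q
      exact ⟨q.out, Quotient.out_eq q⟩
    have hbij : Function.Bijective (qm D ({a} : Set D.E)) :=
      (Fintype.bijective_iff_surjective_and_card _).mpr ⟨hsurj, hcard.symm⟩
    exact hnl (hbij.1 hqm_eq)
  obtain ⟨J', hJ'⟩ := h.2 D' ⟨hminor, hnotiso⟩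
  refine ⟨Subtype.val '' J', ?_⟩
  intro β hβ haβ
  obtain ⟨⟨⟨hβne, W, hβW⟩, hβbond⟩, ⟨_, W₀, hβW₀, hdirW₀⟩⟩ := hβ
  -- use the directed side W₀
  have hβW' : β = D.cutAt W₀ := hβW₀
  have hdirW : ∀ e : D.E, ¬(D.tail e ∉ W₀ ∧ D.head e ∈ W₀) := hdirW₀
  have hWa : D.tail a ∈ W₀ ↔ D.head a ∈ W₀ := by
    have := hβW' ▸ haβ
    simp only [cutAt, Set.mem_setOf_eq] at this
    tauto
  -- membership in the pushed-forward side
  set W' : Set D'.V := (qm D ({a} : Set D.E)) '' W₀ with hW'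
  have hmemW' : ∀ v : D.V, qm D ({a} : Set D.E) v ∈ W' ↔ v ∈ W₀ := by
    intro v
    constructor
    · rintro ⟨w, hw, heq⟩
      have : EqvGen (D.touchRel ({a} : Set D.E)) w v := Quotient.eq.mp heq
      rcases eqvgen_single.mp this with rfl | ⟨h1, h2⟩ | ⟨h1, h2⟩
      · exact hw
      · rw [h2]
        rw [h1] at hw
        exact hWa.mp hw
      · rw [h2]
        rw [h1] at hw
        exact hWa.mpr hw
    · intro hv
      exact ⟨v, hv, rfl⟩
  have hcutW' : ∀ g : D'.E, g ∈ D'.cutAt W' ↔ g.1 ∈ D.cutAt W₀ := by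
    intro g
    show ((D'.tail g ∈ W' ∧ D'.head g ∉ W') ∨ (D'.tail g ∉ W' ∧ D'.head g ∈ W')) ↔ _
    rw [show D'.tail g = qm D ({a} : Set D.E) (D.tail g.1) from rfl,
      show D'.head g = qm D ({a} : Set D.E) (D.head g.1) from rfl,
      hmemW' (D.tail g.1), hmemW' (D.head g.1)]
    exact Iff.rfl
  set β' : Set D'.E := {g : D'.E | g.1 ∈ β} with hβ'def
  have hβ'cut : β' = D'.cutAt W' := by
    ext g
    rw [hcutW' g]
    show g.1 ∈ β ↔ _
    rw [hβW']
  have hβ'ne : β'.Nonempty := by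
    obtain ⟨b, hb⟩ := hβne
    have hba : b ∉ ({a} : Set D.E) := by
      simp only [Set.mem_singleton_iff]
      rintro rfl
      exact haβ hb
    exact ⟨⟨b, hba⟩, hb⟩
  have hβ'dir : D'.IsDirectedCut β' := by
    refine ⟨hβ'ne, W', hβ'cut, ?_⟩
    rintro g ⟨hgt, hgh⟩
    rw [show D'.tail g = qm D ({a} : Set D.E) (D.tail g.1) from rfl, hmemW'] at hgt
    rw [show D'.head g = qm D ({a} : Set D.E) (D.head g.1) from rfl, hmemW'] at hgh
    exact hdirW g.1 ⟨hgt, hgh⟩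
  have hβ'bond : D'.IsBond β' := by
    refine ⟨⟨hβ'ne, W', hβ'cut⟩, ?_⟩
    intro T' hT' hT'sub
    obtain ⟨hT'ne, Z', hT'Z⟩ := hT'
    set Z : Set D.V := {v | qm D ({a} : Set D.E) v ∈ Z'} with hZ
    have hZcut : D.cutAt Z = Subtype.val '' T' := by
      ext e
      constructor
      · intro he
        have hZmem : ∀ v, v ∈ Z ↔ qm D ({a} : Set D.E) v ∈ Z' := fun v => Iff.rfl
        have hea : e ≠ a := by
          intro heq
          have key : D.tail e ∈ Z ↔ D.head e ∈ Z := by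
            rw [hZmem, hZmem, heq, hqm_eq]
          rcases he with ⟨h1, h2⟩ | ⟨h1, h2⟩
          · exact h2 (key.mp h1)
          · exact h1 (key.mpr h2)
        have hmem : (⟨e, by simpa using hea⟩ : D'.E) ∈ T' := by
          rw [hT'Z]
          exact he
        exact ⟨⟨e, by simpa using hea⟩, hmem, rfl⟩
      · rintro ⟨g, hg, rfl⟩
        rw [hT'Z] at hg
        exact hg
    have hZisCut : D.IsCut (D.cutAt Z) := by
      refine ⟨?_, Z, rfl⟩
      obtain ⟨g, hg⟩ := hT'ne
      rw [hZcut]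
      exact ⟨g.1, g, hg, rfl⟩
    have hZsubβ : D.cutAt Z ⊆ β := by
      rw [hZcut]
      rintro e ⟨g, hg, rfl⟩
      exact hT'sub hg
    have hZβ : D.cutAt Z = β := hβbond _ hZisCut hZsubβ
    ext g
    constructor
    · exact fun hg => hT'sub hg
    · intro hg
      have : g.1 ∈ D.cutAt Z := by
        rw [hZβ]
        exact hg
      rw [hZcut] at this
      obtain ⟨g', hg', hval⟩ := this
      have : g' = g := Subtype.val_injective hval
      rwa [← this]
  have hodd' : Odd (J' ∩ β').ncard := hJ' β' ⟨hβ'bond, hβ'dir⟩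
  have himg : (Subtype.val '' J') ∩ β = Subtype.val '' (J' ∩ β') := by
    ext e
    constructor
    · rintro ⟨⟨g, hg, rfl⟩, heβ⟩
      exact ⟨g, ⟨hg, heβ⟩, rfl⟩
    · rintro ⟨g, ⟨hg, hgβ⟩, rfl⟩
      exact ⟨⟨g, hg, rfl⟩, hgβ⟩
  rw [← odd_pr_iff, himg, Set.ncard_image_of_injective _ Subtype.val_injective]
  exact hodd'

end Stmt13

namespace Stmt13

open MultiDigraph Relation

variable {D : MultiDigraph}

lemma zmod2_add_eq_zero : ∀ a b : ZMod 2, a + b = 0 → b = a := by decide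

lemma fun_add_eq_zero {α : Type} (x y : α → ZMod 2) (h : x + y = 0) : y = x := by
  funext i
  have := congrFun h i
  exact zmod2_add_eq_zero _ _ this

lemma split_list {α : Type} {M : Type} [AddCommMonoid M] (f : α → M) (P : α → Prop) :
    ∀ Q : List α, ∃ M₁ M₂ : List α, (∀ x ∈ M₁, x ∈ Q ∧ P x) ∧ (∀ x ∈ M₂, x ∈ Q ∧ ¬ P x) ∧
      (M₁.map f).sum + (M₂.map f).sum = (Q.map f).sum ∧
      M₁.length + M₂.length = Q.length := by
  intro Q
  classical
  induction Q with
  | nil => exact ⟨[], [], by simp, by simp, by simp, by simp⟩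
  | cons x t ih =>
      obtain ⟨M₁, M₂, hm₁, hm₂, hsum, hlen⟩ := ih
      by_cases hx : P x
      · refine ⟨x :: M₁, M₂, ?_, ?_, ?_, ?_⟩
        · intro y hy
          rcases List.mem_cons.mp hy with rfl | hy
          · exact ⟨by simp, hx⟩
          · exact ⟨by simp [(hm₁ y hy).1], (hm₁ y hy).2⟩
        · intro y hy
          exact ⟨by simp [(hm₂ y hy).1], (hm₂ y hy).2⟩
        · simp only [List.map_cons, List.sum_cons]
          rw [add_assoc, hsum]
        · simp only [List.length_cons]
          omega
      · refine ⟨M₁, x :: M₂, ?_, ?_, ?_, ?_⟩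
        · intro y hy
          exact ⟨by simp [(hm₁ y hy).1], (hm₁ y hy).2⟩
        · intro y hy
          rcases List.mem_cons.mp hy with rfl | hy
          · exact ⟨by simp, hx⟩
          · exact ⟨by simp [(hm₂ y hy).1], (hm₂ y hy).2⟩
        · simp only [List.map_cons, List.sum_cons]
          rw [← hsum]
          abel
        · simp only [List.length_cons]
          omega

lemma eind_symmdiff {α : Type} (P Q : Set α) :
    eindicator ((P ∪ Q) \ (P ∩ Q)) = eindicator P + eindicator Q := by
  funext x
  simp only [Pi.add_apply]
  by_cases hP : x ∈ P <;> by_cases hQ : x ∈ Q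
  · rw [eind_zero (fun hx : x ∈ (P ∪ Q) \ (P ∩ Q) => hx.2 ⟨hP, hQ⟩),
      eind_one hP, eind_one hQ, oneone]
  · rw [eind_one (show x ∈ (P ∪ Q) \ (P ∩ Q) from ⟨Or.inl hP, fun hc => hQ hc.2⟩),
      eind_one hP, eind_zero hQ, add_zero]
  · rw [eind_one (show x ∈ (P ∪ Q) \ (P ∩ Q) from ⟨Or.inr hQ, fun hc => hP hc.1⟩),
      eind_zero hP, eind_one hQ, zero_add]
  · rw [eind_zero (fun hx : x ∈ (P ∪ Q) \ (P ∩ Q) =>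
      hx.1.elim (fun hc => hP hc) (fun hc => hQ hc)), eind_zero hP, eind_zero hQ, add_zero]

lemma cv_zero : cv D (eindicator (∅ : Set D.V)) = 0 := by
  funext e
  simp only [cv]
  rw [eind_zero (by simp), eind_zero (by simp)]
  simp

lemma sum_dibonds_is_cut :
    ∀ L : List (Set D.E), (∀ β ∈ L, D.IsDirectedBond β) →
      ∃ Y : Set D.V, (L.map eindicator).sum = cv D (eindicator Y) := by
  intro L
  induction L with
  | nil =>
      intro _
      exact ⟨∅, by simp [cv_zero]⟩
  | cons β t ih =>
      intro hL
      obtain ⟨Y', hY'⟩ := ih (fun γ hγ => hL γ (by simp [hγ]))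
      obtain ⟨_, ⟨_, W, hβW, _⟩⟩ := hL β (by simp)
      refine ⟨(W ∪ Y') \ (W ∩ Y'), ?_⟩
      simp only [List.map_cons, List.sum_cons]
      rw [hY', hβW, eind_cutAt, eind_symmdiff, cv_add]

lemma sum_eind_apply_zero (L : List (Set D.E)) (f : D.E) (h : ∀ γ ∈ L, f ∉ γ) :
    (L.map eindicator).sum f = 0 := by
  induction L with
  | nil => simp
  | cons γ t ih =>
      simp only [List.map_cons, List.sum_cons, Pi.add_apply]
      rw [eind_zero (h γ (by simp)), ih (fun γ' hγ' => h γ' (by simp [hγ']))]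
      simp

lemma pr_sum_ones {J : Set D.E} (L : List (Set D.E))
    (h : ∀ γ ∈ L, pr (eindicator J) (eindicator γ) = 1) :
    pr (eindicator J) ((L.map eindicator).sum) = (L.length : ZMod 2) := by
  have hones : ∀ x ∈ (L.map eindicator).map (pr (eindicator J)), x = 1 := by
    intro x hx
    simp only [List.map_map, List.mem_map] at hx
    obtain ⟨γ, hγ, rfl⟩ := hx
    exact h γ hγ
  rw [pr_list_sum, list_sum_ones _ hones]
  simp

section MainContext

variable {A₁ A₂ : Set D.E} {X : Set D.V}
variable (h : MinimalObstruction D)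
variable (h₁ : A₁.Nonempty) (h₂ : A₂.Nonempty)
variable (hf₁ : D.IsForestOn A₁) (hf₂ : D.IsForestOn A₂)
variable (hac₁ : (D.contract A₁).Acyclic) (hac₂ : (D.contract A₂).Acyclic)
variable (hdircut : ∀ e : D.E, ¬(D.tail e ∉ X ∧ D.head e ∈ X))
variable (hA₁ : ∀ e ∈ A₁, D.tail e ∈ X ∧ D.head e ∈ X)
variable (hA₂ : ∀ e ∈ A₂, D.tail e ∉ X ∧ D.head e ∉ X)

include h h₁ h₂ hf₁ hf₂ hac₁ hac₂ hdircut hA₁ hA₂ in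
/-- Claim 0 : a zero-sum family of directed bonds each avoiding `A₁` or `A₂` is even. -/
lemma claim0 (Q : List (Set D.E))
    (hQ : ∀ γ ∈ Q, D.IsDirectedBond γ ∧ (γ ∩ A₁ = ∅ ∨ γ ∩ A₂ = ∅))
    (hsum : (Q.map eindicator).sum = 0) :
    (Q.length : ZMod 2) = 0 := by
  classical
  obtain ⟨M₁, M₂, hm₁, hm₂, hsplit, hlen⟩ :=
    split_list eindicator (fun γ : Set D.E => γ ∩ A₁ = ∅) Q
  rw [hsum] at hsplit
  have hu₂ : (M₂.map eindicator).sum = (M₁.map eindicator).sum :=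
    fun_add_eq_zero _ _ hsplit
  obtain ⟨Y, hY⟩ := sum_dibonds_is_cut M₁ (fun γ hγ => (hQ γ (hm₁ γ hγ).1).1)
  -- A-closure of Y
  have hclosed : ∀ f ∈ A₁ ∪ A₂, f ∉ D.cutAt Y := by
    intro f hf hcross
    rw [mem_cutAt_iff_cv] at hcross
    rw [← hY] at hcross
    rcases hf with hf | hf
    · rw [sum_eind_apply_zero M₁ f (fun γ hγ => by
        intro hmem
        have hemp := (hm₁ γ hγ).2
        rw [Set.eq_empty_iff_forall_notMem] at hemp
        exact hemp f ⟨hmem, hf⟩)] at hcross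
      exact one_ne_zero hcross.symm
    · rw [← hu₂, sum_eind_apply_zero M₂ f (fun γ hγ => by
        intro hmem
        rcases (hQ γ (hm₂ γ hγ).1).2 with hemp | hemp
        · exact (hm₂ γ hγ).2 hemp
        · rw [Set.eq_empty_iff_forall_notMem] at hemp
          exact hemp f ⟨hmem, hf⟩)] at hcross
      exact one_ne_zero hcross.symm
  -- the Star property for A₁ ∪ A₂
  have starA : StarP D (A₁ ∪ A₂) := by
    apply StarP_of hf₁ hf₂ hac₁ hac₂ hdircut hA₁ hA₂
    · intro f hf htouch
      rcases hf with hf | hf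
      · exact hf
      · rcases htouch with ht | ht
        · exact absurd ht (fun hc => (hA₂ f hf).1 hc)
        · exact absurd ht (fun hc => (hA₂ f hf).2 hc)
    · intro f hf htouch
      rcases hf with hf | hf
      · rcases htouch with ht | ht
        · exact absurd (hA₁ f hf).1 ht
        · exact absurd (hA₁ f hf).2 ht
      · exact hf
  obtain ⟨N, hN, hNsum⟩ := rep_cut D (A₁ ∪ A₂) starA Y.ncard Y le_rfl hclosed
  have hNsum' : (N.map eindicator).sum = (M₁.map eindicator).sum := by
    rw [hNsum, eind_cutAt, ← hY]
  -- pairing with J_{a₁}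
  obtain ⟨a₁, ha₁⟩ := h₁
  obtain ⟨a₂, ha₂⟩ := h₂
  obtain ⟨J₁, hJ₁⟩ := exists_Ja h (forest_no_loop hf₁ ha₁)
  obtain ⟨J₂, hJ₂⟩ := exists_Ja h (forest_no_loop hf₂ ha₂)
  have hones₁ : ∀ γ ∈ M₁ ++ N, pr (eindicator J₁) (eindicator γ) = 1 := by
    intro γ hγ
    rcases List.mem_append.mp hγ with hγ | hγ
    · refine hJ₁ γ (hQ γ (hm₁ γ hγ).1).1 ?_
      intro hmem
      have hemp := (hm₁ γ hγ).2
      rw [Set.eq_empty_iff_forall_notMem] at hemp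
      exact hemp a₁ ⟨hmem, ha₁⟩
    · refine hJ₁ γ (hN γ hγ).1 ?_
      intro hmem
      have hemp := (hN γ hγ).2
      rw [Set.eq_empty_iff_forall_notMem] at hemp
      exact hemp a₁ ⟨hmem, Or.inl ha₁⟩
  have hones₂ : ∀ γ ∈ M₂ ++ N, pr (eindicator J₂) (eindicator γ) = 1 := by
    intro γ hγ
    rcases List.mem_append.mp hγ with hγ | hγ
    · refine hJ₂ γ (hQ γ (hm₂ γ hγ).1).1 ?_
      intro hmem
      rcases (hQ γ (hm₂ γ hγ).1).2 with hemp | hemp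
      · exact (hm₂ γ hγ).2 hemp
      · rw [Set.eq_empty_iff_forall_notMem] at hemp
        exact hemp a₂ ⟨hmem, ha₂⟩
    · refine hJ₂ γ (hN γ hγ).1 ?_
      intro hmem
      have hemp := (hN γ hγ).2
      rw [Set.eq_empty_iff_forall_notMem] at hemp
      exact hemp a₂ ⟨hmem, Or.inr ha₂⟩
  have hzero₁ : ((M₁ ++ N).map eindicator).sum = 0 := by
    rw [List.map_append, List.sum_append, hNsum']
    exact add_self_fun _
  have hzero₂ : ((M₂ ++ N).map eindicator).sum = 0 := by
    rw [List.map_append, List.sum_append, hNsum', hu₂]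
    exact add_self_fun _
  have hlen₁ : ((M₁ ++ N).length : ZMod 2) = 0 := by
    rw [← pr_sum_ones (J := J₁) _ hones₁, hzero₁]
    exact pr_zero_right _
  have hlen₂ : ((M₂ ++ N).length : ZMod 2) = 0 := by
    rw [← pr_sum_ones (J := J₂) _ hones₂, hzero₂]
    exact pr_zero_right _
  have : (Q.length : ZMod 2) = ((M₁ ++ N).length : ZMod 2) + ((M₂ ++ N).length : ZMod 2) := by
    simp only [List.length_append]
    rw [← hlen]
    push_cast
    ring_nf
    rw [show ((N.length : ZMod 2) * 2 = 0) from by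
      rw [two_eq_zero]; ring]
    ring
  rw [this, hlen₁, hlen₂, add_zero]

end MainContext

end Stmt13

namespace Stmt13

open MultiDigraph Relation

variable {D : MultiDigraph}

section MainContext2

variable {A₁ A₂ : Set D.E} {X : Set D.V}
variable (h : MinimalObstruction D)
variable (h₁ : A₁.Nonempty) (h₂ : A₂.Nonempty)
variable (hf₁ : D.IsForestOn A₁) (hf₂ : D.IsForestOn A₂)
variable (hac₁ : (D.contract A₁).Acyclic) (hac₂ : (D.contract A₂).Acyclic)
variable (hdircut : ∀ e : D.E, ¬(D.tail e ∉ X ∧ D.head e ∈ X))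
variable (hA₁ : ∀ e ∈ A₁, D.tail e ∈ X ∧ D.head e ∈ X)
variable (hA₂ : ∀ e ∈ A₂, D.tail e ∉ X ∧ D.head e ∉ X)

include hf₁ hf₂ hac₁ hac₂ hdircut hA₁ hA₂ in
lemma starP_sub (A' : Set D.E) (hsub : A' ⊆ A₁ ∪ A₂) : StarP D A' := by
  apply StarP_of hf₁ hf₂ hac₁ hac₂ hdircut hA₁ hA₂
  · intro f hf htouch
    rcases hsub hf with hf1 | hf2
    · exact hf1
    · rcases htouch with ht | ht
      · exact absurd ht (hA₂ f hf2).1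
      · exact absurd ht (hA₂ f hf2).2
  · intro f hf htouch
    rcases hsub hf with hf1 | hf2
    · rcases htouch with ht | ht
      · exact absurd (hA₁ f hf1).1 ht
      · exact absurd (hA₁ f hf1).2 ht
    · exact hf2

include h h₁ h₂ hf₁ hf₂ hac₁ hac₂ hdircut hA₁ hA₂ in
lemma decomp_one (β : Set D.E) (hβ : D.IsDirectedBond β) {a : D.E}
    (ha : a ∈ A₁ ∪ A₂) (haβ : a ∉ β) :
    ∃ Q : List (Set D.E),
      (∀ γ ∈ Q, D.IsDirectedBond γ ∧ (γ ∩ A₁ = ∅ ∨ γ ∩ A₂ = ∅)) ∧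
      (Q.map eindicator).sum = eindicator β ∧ (Q.length : ZMod 2) = 1 := by
  classical
  obtain ⟨hbond, ⟨hβne, W, hβW, hdirW⟩⟩ := hβ
  have hnl : D.tail a ≠ D.head a := by
    rcases ha with ha' | ha'
    · exact forest_no_loop hf₁ ha'
    · exact forest_no_loop hf₂ ha'
  obtain ⟨Ja, hJa⟩ := exists_Ja h hnl
  have haW : D.tail a ∈ W ↔ D.head a ∈ W := by
    have := hβW ▸ haβ
    simp only [cutAt, Set.mem_setOf_eq] at this
    tauto
  -- a does not cross the relevant intersections
  have hcl_a_in : a ∉ D.cutAt (X ∩ Wᶜ) → True := fun _ => trivial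
  have hacross : ∀ (S : Set D.V), (D.tail a ∈ S ↔ D.head a ∈ S) → a ∉ D.cutAt (S ∩ Wᶜ) := by
    intro S hS hcross
    rcases hcross with ⟨⟨ht1, ht2⟩, hh⟩ | ⟨ht, ⟨hh1, hh2⟩⟩
    · have hhS : D.head a ∈ S := hS.mp ht1
      have hhW : D.head a ∈ W := by
        by_contra hc
        exact hh ⟨hhS, hc⟩
      exact ht2 (haW.mpr hhW)
    · have htS : D.tail a ∈ S := hS.mpr hh1
      have htW : D.tail a ∈ W := by
        by_contra hc
        exact ht ⟨htS, hc⟩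
      exact hh2 (haW.mp htW)
  -- decompose into the two sides
  have hsum2 : eindicator β =
      eindicator (D.cutAt (X ∩ Wᶜ)) + eindicator (D.cutAt ((Xᶜ : Set D.V) ∩ Wᶜ)) := by
    rw [hβW, eind_cutAt, eind_cutAt, eind_cutAt, ← cv_eind_compl,
      ← eind_inter_compl_add X W, cv_add]
  rcases ha with haA₁ | haA₂
  · -- a ∈ A₁ : left side avoids A₂ ∪ {a}, right side avoids A₁
    have hstar₁ : StarP D (A₂ ∪ {a}) := by
      apply starP_sub hf₁ hf₂ hac₁ hac₂ hdircut hA₁ hA₂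
      rintro f (hf | hf)
      · exact Or.inr hf
      · rw [Set.mem_singleton_iff] at hf
        exact Or.inl (hf ▸ haA₁)
    have hstar₂ : StarP D A₁ :=
      starP_sub hf₁ hf₂ hac₁ hac₂ hdircut hA₁ hA₂ A₁ (fun f hf => Or.inl hf)
    have hcl₁ : ∀ f ∈ A₂ ∪ {a}, f ∉ D.cutAt (X ∩ Wᶜ) := by
      rintro f (hf | hf) hcross
      · rcases hcross with ⟨⟨ht1, _⟩, _⟩ | ⟨_, ⟨hh1, _⟩⟩
        · exact (hA₂ f hf).1 ht1
        · exact (hA₂ f hf).2 hh1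
      · rw [Set.mem_singleton_iff] at hf
        subst hf
        exact hacross X ⟨fun _ => (hA₁ f haA₁).2, fun _ => (hA₁ f haA₁).1⟩ hcross
    have hcl₂ : ∀ f ∈ A₁, f ∉ D.cutAt ((Xᶜ : Set D.V) ∩ Wᶜ) := by
      intro f hf hcross
      rcases hcross with ⟨⟨ht1, _⟩, _⟩ | ⟨_, ⟨hh1, _⟩⟩
      · exact ht1 (hA₁ f hf).1
      · exact hh1 (hA₁ f hf).2
    obtain ⟨Q₁, hQ₁, hs₁⟩ := rep_cut D (A₂ ∪ {a}) hstar₁ (X ∩ Wᶜ).ncard _ le_rfl hcl₁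
    obtain ⟨Q₂, hQ₂, hs₂⟩ := rep_cut D A₁ hstar₂ ((Xᶜ : Set D.V) ∩ Wᶜ).ncard _ le_rfl hcl₂
    refine ⟨Q₁ ++ Q₂, ?_, ?_, ?_⟩
    · intro γ hγ
      rcases List.mem_append.mp hγ with hγ | hγ
      · refine ⟨(hQ₁ γ hγ).1, Or.inr ?_⟩
        have hemp := (hQ₁ γ hγ).2
        rw [Set.eq_empty_iff_forall_notMem] at hemp ⊢
        exact fun g hg => hemp g ⟨hg.1, Or.inl hg.2⟩
      · exact ⟨(hQ₂ γ hγ).1, Or.inl (hQ₂ γ hγ).2⟩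
    · rw [List.map_append, List.sum_append, hs₁, hs₂, hsum2]
    · have havoid : ∀ γ ∈ Q₁ ++ Q₂, pr (eindicator Ja) (eindicator γ) = 1 := by
        intro γ hγ
        rcases List.mem_append.mp hγ with hγ | hγ
        · refine hJa γ (hQ₁ γ hγ).1 ?_
          intro hmem
          have hemp := (hQ₁ γ hγ).2
          rw [Set.eq_empty_iff_forall_notMem] at hemp
          exact hemp a ⟨hmem, Or.inr rfl⟩
        · refine hJa γ (hQ₂ γ hγ).1 ?_
          intro hmem
          have hemp := (hQ₂ γ hγ).2
          rw [Set.eq_empty_iff_forall_notMem] at hemp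
          exact hemp a ⟨hmem, haA₁⟩
      have h1 : pr (eindicator Ja) ((( Q₁ ++ Q₂).map eindicator).sum) =
          (((Q₁ ++ Q₂).length : ℕ) : ZMod 2) := pr_sum_ones _ havoid
      rw [List.map_append, List.sum_append, hs₁, hs₂, ← hsum2] at h1
      rw [← h1]
      exact hJa β ⟨hbond, ⟨hβne, W, hβW, hdirW⟩⟩ haβ
  · -- a ∈ A₂ : left side avoids A₂, right side avoids A₁ ∪ {a}
    have hstar₁ : StarP D A₂ :=
      starP_sub hf₁ hf₂ hac₁ hac₂ hdircut hA₁ hA₂ A₂ (fun f hf => Or.inr hf)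
    have hstar₂ : StarP D (A₁ ∪ {a}) := by
      apply starP_sub hf₁ hf₂ hac₁ hac₂ hdircut hA₁ hA₂
      rintro f (hf | hf)
      · exact Or.inl hf
      · rw [Set.mem_singleton_iff] at hf
        exact Or.inr (hf ▸ haA₂)
    have hcl₁ : ∀ f ∈ A₂, f ∉ D.cutAt (X ∩ Wᶜ) := by
      intro f hf hcross
      rcases hcross with ⟨⟨ht1, _⟩, _⟩ | ⟨_, ⟨hh1, _⟩⟩
      · exact (hA₂ f hf).1 ht1
      · exact (hA₂ f hf).2 hh1
    have hcl₂ : ∀ f ∈ A₁ ∪ {a}, f ∉ D.cutAt ((Xᶜ : Set D.V) ∩ Wᶜ) := by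
      rintro f (hf | hf) hcross
      · rcases hcross with ⟨⟨ht1, _⟩, _⟩ | ⟨_, ⟨hh1, _⟩⟩
        · exact ht1 (hA₁ f hf).1
        · exact hh1 (hA₁ f hf).2
      · rw [Set.mem_singleton_iff] at hf
        subst hf
        refine hacross (Xᶜ : Set D.V) ?_ hcross
        constructor
        · exact fun _ => (hA₂ f haA₂).2
        · exact fun _ => (hA₂ f haA₂).1
    obtain ⟨Q₁, hQ₁, hs₁⟩ := rep_cut D A₂ hstar₁ (X ∩ Wᶜ).ncard _ le_rfl hcl₁
    obtain ⟨Q₂, hQ₂, hs₂⟩ := rep_cut D (A₁ ∪ {a}) hstar₂ ((Xᶜ : Set D.V) ∩ Wᶜ).ncard _ le_rfl hcl₂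
    refine ⟨Q₁ ++ Q₂, ?_, ?_, ?_⟩
    · intro γ hγ
      rcases List.mem_append.mp hγ with hγ | hγ
      · exact ⟨(hQ₁ γ hγ).1, Or.inr (hQ₁ γ hγ).2⟩
      · refine ⟨(hQ₂ γ hγ).1, Or.inl ?_⟩
        have hemp := (hQ₂ γ hγ).2
        rw [Set.eq_empty_iff_forall_notMem] at hemp ⊢
        exact fun g hg => hemp g ⟨hg.1, Or.inl hg.2⟩
    · rw [List.map_append, List.sum_append, hs₁, hs₂, hsum2]
    · have havoid : ∀ γ ∈ Q₁ ++ Q₂, pr (eindicator Ja) (eindicator γ) = 1 := by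
        intro γ hγ
        rcases List.mem_append.mp hγ with hγ | hγ
        · refine hJa γ (hQ₁ γ hγ).1 ?_
          intro hmem
          have hemp := (hQ₁ γ hγ).2
          rw [Set.eq_empty_iff_forall_notMem] at hemp
          exact hemp a ⟨hmem, haA₂⟩
        · refine hJa γ (hQ₂ γ hγ).1 ?_
          intro hmem
          have hemp := (hQ₂ γ hγ).2
          rw [Set.eq_empty_iff_forall_notMem] at hemp
          exact hemp a ⟨hmem, Or.inr rfl⟩
      have h1 : pr (eindicator Ja) ((( Q₁ ++ Q₂).map eindicator).sum) =
          (((Q₁ ++ Q₂).length : ℕ) : ZMod 2) := pr_sum_ones _ havoid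
      rw [List.map_append, List.sum_append, hs₁, hs₂, ← hsum2] at h1
      rw [← h1]
      exact hJa β ⟨hbond, ⟨hβne, W, hβW, hdirW⟩⟩ haβ

include h h₁ h₂ hf₁ hf₂ hac₁ hac₂ hdircut hA₁ hA₂ in
/-- Claim 1 : a zero-sum family of directed bonds not containing all of `A₁ ∪ A₂` is even. -/
lemma even_zero_sum (M : List (Set D.E))
    (hM : ∀ β ∈ M, D.IsDirectedBond β ∧ ¬(A₁ ∪ A₂ ⊆ β))
    (hsum : (M.map eindicator).sum = 0) : (M.length : ZMod 2) = 0 := by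
  classical
  have hbuild : ∀ M' : List (Set D.E), (∀ β ∈ M', D.IsDirectedBond β ∧ ¬(A₁ ∪ A₂ ⊆ β)) →
      ∃ Q : List (Set D.E), (∀ γ ∈ Q, D.IsDirectedBond γ ∧ (γ ∩ A₁ = ∅ ∨ γ ∩ A₂ = ∅)) ∧
        (Q.map eindicator).sum = (M'.map eindicator).sum ∧
        (Q.length : ZMod 2) = (M'.length : ZMod 2) := by
    intro M'
    induction M' with
    | nil => exact fun _ => ⟨[], by simp, by simp, by simp⟩
    | cons β t ih =>
        intro hM'
        obtain ⟨Qt, hQt, hQtsum, hQtlen⟩ := ih (fun γ hγ => hM' γ (by simp [hγ]))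
        obtain ⟨hβb, hβns⟩ := hM' β (by simp)
        obtain ⟨a, ha, haβ⟩ := Set.not_subset.mp hβns
        obtain ⟨Qβ, hQβ, hQβsum, hQβlen⟩ :=
          decomp_one h h₁ h₂ hf₁ hf₂ hac₁ hac₂ hdircut hA₁ hA₂ β hβb ha haβ
        refine ⟨Qβ ++ Qt, ?_, ?_, ?_⟩
        · intro γ hγ
          rcases List.mem_append.mp hγ with hγ | hγ
          · exact hQβ γ hγ
          · exact hQt γ hγ
        · rw [List.map_append, List.sum_append, hQβsum, hQtsum]
          simp [List.sum_cons]
        · simp only [List.length_append, List.length_cons]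
          push_cast
          rw [hQβlen, hQtlen]
          ring
  obtain ⟨Q, hQ, hQsum, hQlen⟩ := hbuild M hM
  rw [← hQlen]
  exact claim0 h h₁ h₂ hf₁ hf₂ hac₁ hac₂ hdircut hA₁ hA₂ Q hQ (by rw [hQsum, hsum])

end MainContext2

end Stmt13
-- STATEMENT 13
theorem stmt13 (D : MultiDigraph) (h : MinimalObstruction D)
    (A₁ A₂ : Set D.E) (h₁ : A₁.Nonempty) (h₂ : A₂.Nonempty)
    (hf₁ : D.IsForestOn A₁) (hf₂ : D.IsForestOn A₂)
    (hac₁ : (D.contract A₁).Acyclic) (hac₂ : (D.contract A₂).Acyclic)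
    (X : Set D.V) (hne : (D.cutAt X).Nonempty)
    (hdircut : ∀ e : D.E, ¬(D.tail e ∉ X ∧ D.head e ∈ X))
    (hA₁ : ∀ e ∈ A₁, D.tail e ∈ X ∧ D.head e ∈ X)
    (hA₂ : ∀ e ∈ A₂, D.tail e ∉ X ∧ D.head e ∉ X) :
    ∃ S : Set D.E, D.IsDirectedBond S ∧ A₁ ∪ A₂ ⊆ S := by
  classical
  open Stmt13 in
  by_contra hcon
  push_neg at hcon
  -- hcon : ∀ S, D.IsDirectedBond S → ¬ (A₁ ∪ A₂ ⊆ S)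
  set Sgen : Set ((D.E → ZMod 2) × ZMod 2) :=
    {p | ∃ β : Set D.E, (D.IsDirectedBond β ∧ ¬(A₁ ∪ A₂ ⊆ β)) ∧ p = (eindicator β, 1)}
    with hSgen
  set Wsp : Submodule (ZMod 2) ((D.E → ZMod 2) × ZMod 2) := Submodule.span (ZMod 2) Sgen
    with hWsp
  have hnotmem : (((0 : D.E → ZMod 2), (1 : ZMod 2)) :
      (D.E → ZMod 2) × ZMod 2) ∉ Wsp := by
    intro hmem
    rw [hWsp, Submodule.mem_span_set] at hmem
    obtain ⟨c, hsupp, hsum⟩ := hmem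
    have hchoice : ∀ p ∈ c.support, ∃ β : Set D.E,
        (D.IsDirectedBond β ∧ ¬(A₁ ∪ A₂ ⊆ β)) ∧ p = (eindicator β, 1) :=
      fun p hp => hsupp hp
    choose! B hB using hchoice
    have hcsum : (∑ p ∈ c.support, p) = (((0 : D.E → ZMod 2), (1 : ZMod 2)) :
        (D.E → ZMod 2) × ZMod 2) := by
      rw [← hsum, Finsupp.sum]
      apply Finset.sum_congr rfl
      intro p hp
      have hcp : c p = 1 := by
        have hne' : c p ≠ 0 := Finsupp.mem_support_iff.mp hp
        rcases (by decide : ∀ x : ZMod 2, x = 0 ∨ x = 1) (c p) with h' | h'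
        · exact absurd h' hne'
        · exact h'
      rw [hcp, one_smul]
    set L : List (Set D.E) := c.support.toList.map B with hL
    have hLmem : ∀ γ ∈ L, D.IsDirectedBond γ ∧ ¬(A₁ ∪ A₂ ⊆ γ) := by
      intro γ hγ
      rw [hL, List.mem_map] at hγ
      obtain ⟨p, hp, rfl⟩ := hγ
      exact (hB p (Finset.mem_toList.mp hp)).1
    have hLsum : (L.map eindicator).sum = 0 := by
      rw [hL, List.map_map, Finset.sum_map_toList]
      have : ∀ p ∈ c.support, (eindicator ∘ B) p = p.1 := by
        intro p hp
        have h2 := (hB p hp).2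
        simp only [Function.comp_apply]
        exact (congrArg Prod.fst h2).symm
      rw [Finset.sum_congr rfl this, ← Prod.fst_sum, hcsum]
    have hLlen : ((L.length : ℕ) : ZMod 2) = 1 := by
      have hsnd : (∑ p ∈ c.support, p.2) = 1 := by
        rw [← Prod.snd_sum, hcsum]
      have hone : ∀ p ∈ c.support, p.2 = (1 : ZMod 2) := by
        intro p hp
        rw [(hB p hp).2]
      rw [Finset.sum_congr rfl hone, Finset.sum_const, nsmul_eq_mul, mul_one] at hsnd
      rw [hL, List.length_map, Finset.length_toList]
      exact hsnd
    have := even_zero_sum h h₁ h₂ hf₁ hf₂ hac₁ hac₂ hdircut hA₁ hA₂ L hLmem hLsum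
    rw [this] at hLlen
    exact one_ne_zero hLlen.symm
  -- a separating functional
  have hx : (Submodule.Quotient.mk (((0 : D.E → ZMod 2), (1 : ZMod 2)) :
      (D.E → ZMod 2) × ZMod 2) : _ ⧸ Wsp) ≠ 0 := by
    intro hc
    exact hnotmem ((Submodule.Quotient.mk_eq_zero Wsp).mp hc)
  obtain ⟨φ, hφ⟩ : ∃ φ : Module.Dual (ZMod 2) (((D.E → ZMod 2) × ZMod 2) ⧸ Wsp),
      φ (Submodule.Quotient.mk (((0 : D.E → ZMod 2), (1 : ZMod 2)) :
        (D.E → ZMod 2) × ZMod 2)) ≠ 0 := by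
    by_contra hcon2
    push_neg at hcon2
    exact hx ((Module.forall_dual_apply_eq_zero_iff (ZMod 2) _).mp hcon2)
  set F : ((D.E → ZMod 2) × ZMod 2) →ₗ[ZMod 2] ZMod 2 := φ.comp Wsp.mkQ with hF
  have hF0 : ∀ β : Set D.E, D.IsDirectedBond β → ¬(A₁ ∪ A₂ ⊆ β) →
      F (eindicator β, 1) = 0 := by
    intro β hb hns
    have hmem : ((eindicator β, (1 : ZMod 2)) : (D.E → ZMod 2) × ZMod 2) ∈ Wsp :=
      Submodule.subset_span ⟨β, ⟨hb, hns⟩, rfl⟩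
    show φ (Wsp.mkQ (eindicator β, 1)) = 0
    rw [Submodule.mkQ_apply, (Submodule.Quotient.mk_eq_zero Wsp).mpr hmem, map_zero]
  have hF1 : F ((0 : D.E → ZMod 2), (1 : ZMod 2)) = 1 := by
    have hne' : F ((0 : D.E → ZMod 2), (1 : ZMod 2)) ≠ 0 := by
      show φ (Wsp.mkQ _) ≠ 0
      rw [Submodule.mkQ_apply]
      exact hφ
    rcases (by decide : ∀ x : ZMod 2, x = 0 ∨ x = 1) (F (0, 1)) with h' | h'
    · exact absurd h' hne'
    · exact h'
  set g : Set D.E := {e | F ((fun j => if e = j then 1 else 0), 0) = 1} with hg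
  have hpr : ∀ u : D.E → ZMod 2, Stmt13.pr (eindicator g) u = F (u, 0) := by
    intro u
    have hexp : ((u, (0 : ZMod 2)) : (D.E → ZMod 2) × ZMod 2) =
        ∑ e : D.E, u e • (((fun j => if e = j then (1 : ZMod 2) else 0) : D.E → ZMod 2),
          (0 : ZMod 2)) := by
      apply Prod.ext
      · rw [Prod.fst_sum]
        simpa using pi_eq_sum_univ u
      · rw [Prod.snd_sum]
        simp
    rw [hexp, map_sum]
    unfold Stmt13.pr
    apply Finset.sum_congr rfl
    intro e _
    rw [LinearMap.map_smul, smul_eq_mul]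
    have hge : eindicator g e = F ((fun j => if e = j then 1 else 0), 0) := by
      by_cases he : e ∈ g
      · rw [Stmt13.eind_one he]
        exact (he : F _ = 1).symm
      · rw [Stmt13.eind_zero he]
        rcases (by decide : ∀ x : ZMod 2, x = 0 ∨ x = 1)
            (F ((fun j => if e = j then 1 else 0), 0)) with h' | h'
        · exact h'.symm
        · exact absurd h' he
    rw [hge]
    ring
  have hodd : D.IsOddDijoin g := by
    intro S hS
    have hns : ¬(A₁ ∪ A₂ ⊆ S) := hcon S hS
    have h0 := hF0 S hS hns
    have hsplit : ((eindicator S, (1 : ZMod 2)) : (D.E → ZMod 2) × ZMod 2) =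
        (eindicator S, (0 : ZMod 2)) + ((0 : D.E → ZMod 2), (1 : ZMod 2)) := by
      apply Prod.ext <;> simp
    rw [hsplit, map_add, hF1] at h0
    have hFS : F (eindicator S, 0) = 1 := by
      rcases (by decide : ∀ x : ZMod 2, x + 1 = 0 → x = 1) (F (eindicator S, 0)) h0 with h'
      exact h'
    rw [Stmt13.odd_pr_iff, hpr]
    exact hFS
  exact h.1 ⟨g, hodd⟩
end

section
/- Let n₁, n₂ ≥ 1 be integers. Then the digraph 𝒟(n₁,n₂,0) (which is isomorphic to 𝒟(0,n₁,n₂)) has an odd dijoin if and only if min(n₁,n₂) ≤ 1, or n₁, n₂ ≥ 2 and n₁ ≡ n₂ (mod 2). -/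
open Relation

/-! ## Auxiliary lemmas for Statement 16 -/

attribute [reducible] layeredD

namespace Stmt16

open MultiDigraph Sum

variable {m n : ℕ}

lemma edge_cases (e : (layeredD m n 0).E) : ∃ a b, e = Sum.inl (a, b) := by
  rcases e with ⟨a, b⟩ | ⟨b, z⟩
  · exact ⟨a, b, rfl⟩
  · exact z.elim0

/-- The set of edges out of vertex `a` of the first layer. -/
def row (m n : ℕ) (a : Fin m) : Set (layeredD m n 0).E :=
  {e | ∃ b, e = Sum.inl (a, b)}

/-- The set of edges into vertex `b` of the second layer. -/
def col (m n : ℕ) (b : Fin n) : Set (layeredD m n 0).E :=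
  {e | ∃ a, e = Sum.inl (a, b)}

lemma E_inl_inj {a a' : Fin m} {b b' : Fin n}
    (h : (Sum.inl (a, b) : (layeredD m n 0).E) = Sum.inl (a', b')) : a = a' ∧ b = b' := by
  have h' : (Sum.inl (a, b) : (Fin m × Fin n) ⊕ (Fin n × Fin 0)) = Sum.inl (a', b') := h
  simpa [Prod.ext_iff] using h'

lemma V_inl_inl_eq {a a' : Fin m} :
    (Sum.inl (Sum.inl a) : (layeredD m n 0).V) = Sum.inl (Sum.inl a') ↔ a = a' := by
  have : ((Sum.inl (Sum.inl a) : (Fin m ⊕ Fin n) ⊕ Fin 0) = Sum.inl (Sum.inl a')) ↔ a = a' := by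
    simp
  exact this

lemma V_inr_inr_eq {b b' : Fin n} :
    (Sum.inl (Sum.inr b) : (layeredD m n 0).V) = Sum.inl (Sum.inr b') ↔ b = b' := by
  have : ((Sum.inl (Sum.inr b) : (Fin m ⊕ Fin n) ⊕ Fin 0) = Sum.inl (Sum.inr b')) ↔ b = b' := by
    simp
  exact this

lemma V_inr_ne_inl {a : Fin m} {b : Fin n} :
    (Sum.inl (Sum.inr b) : (layeredD m n 0).V) ≠ Sum.inl (Sum.inl a) := by
  have : (Sum.inl (Sum.inr b) : (Fin m ⊕ Fin n) ⊕ Fin 0) ≠ Sum.inl (Sum.inl a) := by simp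
  exact this

lemma V_inl_ne_inr {a : Fin m} {b : Fin n} :
    (Sum.inl (Sum.inl a) : (layeredD m n 0).V) ≠ Sum.inl (Sum.inr b) := by
  have : (Sum.inl (Sum.inl a) : (Fin m ⊕ Fin n) ⊕ Fin 0) ≠ Sum.inl (Sum.inr b) := by simp
  exact this

lemma mem_row_iff {a a' : Fin m} {b : Fin n} :
    (Sum.inl (a, b) : (layeredD m n 0).E) ∈ row m n a' ↔ a = a' :=
  ⟨fun ⟨_, hb⟩ => (E_inl_inj hb).1, fun h => ⟨b, by rw [h]⟩⟩

lemma mem_col_iff {a : Fin m} {b b' : Fin n} :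
    (Sum.inl (a, b) : (layeredD m n 0).E) ∈ col m n b' ↔ b = b' :=
  ⟨fun ⟨_, ha⟩ => (E_inl_inj ha).2, fun h => ⟨a, by rw [h]⟩⟩

lemma cutAt_compl (D : MultiDigraph) (X : Set D.V) : D.cutAt Xᶜ = D.cutAt X := by
  ext e
  simp only [MultiDigraph.cutAt, Set.mem_setOf_eq, Set.mem_compl_iff, not_not]
  tauto

lemma mem_cutAt_iff (X : Set (layeredD m n 0).V) (a : Fin m) (b : Fin n) :
    (Sum.inl (a, b) : (layeredD m n 0).E) ∈ (layeredD m n 0).cutAt X ↔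
      ((Sum.inl (Sum.inl a) ∈ X ∧ Sum.inl (Sum.inr b) ∉ X) ∨
       (Sum.inl (Sum.inl a) ∉ X ∧ Sum.inl (Sum.inr b) ∈ X)) := Iff.rfl

lemma row_eq_cutAt (a : Fin m) :
    (layeredD m n 0).cutAt {Sum.inl (Sum.inl a)} = row m n a := by
  ext e
  obtain ⟨a', b, rfl⟩ := edge_cases e
  rw [mem_cutAt_iff, mem_row_iff]
  constructor
  · rintro (⟨h1, -⟩ | ⟨-, h2⟩)
    · exact V_inl_inl_eq.mp h1
    · exact absurd h2 V_inr_ne_inl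
  · rintro rfl
    exact Or.inl ⟨rfl, fun h => V_inr_ne_inl h⟩

lemma col_eq_cutAt (b : Fin n) :
    (layeredD m n 0).cutAt {Sum.inl (Sum.inr b)} = col m n b := by
  ext e
  obtain ⟨a, b', rfl⟩ := edge_cases e
  rw [mem_cutAt_iff, mem_col_iff]
  constructor
  · rintro (⟨h1, -⟩ | ⟨-, h2⟩)
    · exact absurd h1 V_inl_ne_inr
    · exact V_inr_inr_eq.mp h2
  · rintro rfl
    exact Or.inr ⟨fun h => V_inl_ne_inr h, rfl⟩

lemma row_nonempty (hn : 1 ≤ n) (a : Fin m) : (row m n a).Nonempty :=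
  ⟨Sum.inl (a, ⟨0, hn⟩), ⟨_, rfl⟩⟩

lemma col_nonempty (hm : 1 ≤ m) (b : Fin n) : (col m n b).Nonempty :=
  ⟨Sum.inl (⟨0, hm⟩, b), ⟨_, rfl⟩⟩

lemma row_isCut (hn : 1 ≤ n) (a : Fin m) : (layeredD m n 0).IsCut (row m n a) :=
  ⟨row_nonempty hn a, _, (row_eq_cutAt a).symm⟩

lemma col_isCut (hm : 1 ≤ m) (b : Fin n) : (layeredD m n 0).IsCut (col m n b) :=
  ⟨col_nonempty hm b, _, (col_eq_cutAt b).symm⟩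

lemma row_isDirectedCut (hn : 1 ≤ n) (a : Fin m) :
    (layeredD m n 0).IsDirectedCut (row m n a) := by
  refine ⟨row_nonempty hn a, {Sum.inl (Sum.inl a)}, (row_eq_cutAt a).symm, ?_⟩
  rintro e ⟨-, h2⟩
  obtain ⟨a', b, rfl⟩ := edge_cases e
  exact V_inr_ne_inl h2

lemma col_isDirectedCut (hm : 1 ≤ m) (b : Fin n) :
    (layeredD m n 0).IsDirectedCut (col m n b) := by
  refine ⟨col_nonempty hm b, {Sum.inl (Sum.inr b)}ᶜ, ?_, ?_⟩
  · rw [cutAt_compl, col_eq_cutAt]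
  · rintro e ⟨h1, -⟩
    obtain ⟨a, b', rfl⟩ := edge_cases e
    exact V_inl_ne_inr (not_not.mp h1)

lemma row_isBond (hm : 2 ≤ m) (hn : 1 ≤ n) (a₀ : Fin m) :
    (layeredD m n 0).IsBond (row m n a₀) := by
  refine ⟨row_isCut hn a₀, ?_⟩
  rintro S' ⟨hne, X, rfl⟩ hsub
  have : Nontrivial (Fin m) := Fin.nontrivial_iff_two_le.mpr hm
  obtain ⟨a₁, ha₁⟩ := exists_ne a₀
  have hP : ∀ a : Fin m, a ≠ a₀ → ∀ b : Fin n,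
      (Sum.inl (Sum.inl a) ∈ X ↔ Sum.inl (Sum.inr b) ∈ X) := by
    intro a ha b
    have hmem : (Sum.inl (a, b) : (layeredD m n 0).E) ∉ (layeredD m n 0).cutAt X := by
      intro h
      exact ha (mem_row_iff.mp (hsub h))
    rw [mem_cutAt_iff] at hmem
    tauto
  obtain ⟨e, he⟩ := hne
  obtain ⟨a', b₀, rfl⟩ := edge_cases e
  have ha' : a' = a₀ := mem_row_iff.mp (hsub he)
  subst ha'
  rw [mem_cutAt_iff] at he
  apply Set.Subset.antisymm hsub
  rintro e ⟨b, rfl⟩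
  rw [mem_cutAt_iff]
  rcases he with ⟨h1, h2⟩ | ⟨h1, h2⟩
  · left
    refine ⟨h1, fun hb => h2 ((hP a₁ ha₁ b₀).mp ((hP a₁ ha₁ b).mpr hb))⟩
  · right
    exact ⟨h1, (hP a₁ ha₁ b).mp ((hP a₁ ha₁ b₀).mpr h2)⟩

lemma col_isBond (hm : 1 ≤ m) (hn : 2 ≤ n) (b₀ : Fin n) :
    (layeredD m n 0).IsBond (col m n b₀) := by
  refine ⟨col_isCut hm b₀, ?_⟩
  rintro S' ⟨hne, X, rfl⟩ hsub
  have : Nontrivial (Fin n) := Fin.nontrivial_iff_two_le.mpr hn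
  obtain ⟨b₁, hb₁⟩ := exists_ne b₀
  have hQ : ∀ b : Fin n, b ≠ b₀ → ∀ a : Fin m,
      (Sum.inl (Sum.inl a) ∈ X ↔ Sum.inl (Sum.inr b) ∈ X) := by
    intro b hb a
    have hmem : (Sum.inl (a, b) : (layeredD m n 0).E) ∉ (layeredD m n 0).cutAt X := by
      intro h
      exact hb (mem_col_iff.mp (hsub h))
    rw [mem_cutAt_iff] at hmem
    tauto
  obtain ⟨e, he⟩ := hne
  obtain ⟨a₀, b', rfl⟩ := edge_cases e
  have hb' : b' = b₀ := mem_col_iff.mp (hsub he)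
  subst hb'
  rw [mem_cutAt_iff] at he
  apply Set.Subset.antisymm hsub
  rintro e ⟨a, rfl⟩
  rw [mem_cutAt_iff]
  rcases he with ⟨h1, h2⟩ | ⟨h1, h2⟩
  · left
    exact ⟨(hQ b₁ hb₁ a).mpr ((hQ b₁ hb₁ a₀).mp h1), h2⟩
  · right
    exact ⟨fun ha => h1 ((hQ b₁ hb₁ a₀).mpr ((hQ b₁ hb₁ a).mp ha)), h2⟩

/-- Classification of directed bonds of `layeredD m n 0`. -/
lemma directedBond_cases (hm : 1 ≤ m) (hn : 1 ≤ n) {S : Set (layeredD m n 0).E}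
    (hS : (layeredD m n 0).IsDirectedBond S) :
    (∃ a, S = row m n a ∧ (2 ≤ n → 2 ≤ m)) ∨ (∃ b, S = col m n b ∧ (2 ≤ m → 2 ≤ n)) := by
  obtain ⟨⟨hcut, hmin⟩, hne, X, hX, hdir⟩ := hS
  by_cases hP : ∀ a : Fin m, Sum.inl (Sum.inl a) ∈ X
  · -- S is a column
    obtain ⟨e, he⟩ := hne
    obtain ⟨a', b₀, rfl⟩ := edge_cases e
    rw [hX, mem_cutAt_iff] at he
    have hb₀ : Sum.inl (Sum.inr b₀) ∉ X := by
      rcases he with ⟨-, h⟩ | ⟨h, -⟩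
      · exact h
      · exact absurd (hP a') h
    have hcolsub : col m n b₀ ⊆ S := by
      rintro e ⟨a, rfl⟩
      rw [hX, mem_cutAt_iff]
      exact Or.inl ⟨hP a, hb₀⟩
    have hcol : S = col m n b₀ := (hmin _ (col_isCut hm b₀) hcolsub).symm
    refine Or.inr ⟨b₀, hcol, ?_⟩
    intro hm2
    by_contra hn2
    have hn1 : n = 1 := by omega
    subst hn1
    have : Nontrivial (Fin m) := Fin.nontrivial_iff_two_le.mpr hm2
    obtain ⟨a, a', haa'⟩ := exists_pair_ne (Fin m)
    have hrowsub : row m 1 a ⊆ S := by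
      rintro e ⟨b, rfl⟩
      have hb : b = b₀ := Subsingleton.elim b b₀
      subst hb
      exact hcolsub ⟨a, rfl⟩
    have hrowS : row m 1 a = S := hmin _ (row_isCut hn a) hrowsub
    have h1 : (Sum.inl (a', b₀) : (layeredD m 1 0).E) ∈ S := by
      rw [hcol]; exact ⟨a', rfl⟩
    rw [← hrowS] at h1
    exact haa' (mem_row_iff.mp h1).symm
  · -- S is a row
    push_neg at hP
    obtain ⟨a₁, ha₁⟩ := hP
    have hQ : ∀ b : Fin n, Sum.inl (Sum.inr b) ∉ X := by
      intro b hb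
      exact hdir (Sum.inl (a₁, b)) ⟨ha₁, hb⟩
    obtain ⟨e, he⟩ := hne
    obtain ⟨a₀, b', rfl⟩ := edge_cases e
    rw [hX, mem_cutAt_iff] at he
    have ha₀ : Sum.inl (Sum.inl a₀) ∈ X := by
      rcases he with ⟨h, -⟩ | ⟨-, h⟩
      · exact h
      · exact absurd h (hQ b')
    have hrowsub : row m n a₀ ⊆ S := by
      rintro e ⟨b, rfl⟩
      rw [hX, mem_cutAt_iff]
      exact Or.inl ⟨ha₀, hQ b⟩
    have hrow : S = row m n a₀ := (hmin _ (row_isCut hn a₀) hrowsub).symm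
    refine Or.inl ⟨a₀, hrow, ?_⟩
    intro hn2
    by_contra hm2
    have hm1 : m = 1 := by omega
    subst hm1
    have : Nontrivial (Fin n) := Fin.nontrivial_iff_two_le.mpr hn2
    obtain ⟨b, b', hbb'⟩ := exists_pair_ne (Fin n)
    have hcolsub : col 1 n b ⊆ S := by
      rintro e ⟨a, rfl⟩
      have ha : a = a₀ := Subsingleton.elim a a₀
      subst ha
      exact hrowsub ⟨b, rfl⟩
    have hcolS : col 1 n b = S := hmin _ (col_isCut hm b) hcolsub
    have h1 : (Sum.inl (a₀, b') : (layeredD 1 n 0).E) ∈ S := by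
      rw [hrow]; exact ⟨b', rfl⟩
    rw [← hcolS] at h1
    exact hbb' (mem_col_iff.mp h1).symm

end Stmt16

namespace Stmt16

variable {m n : ℕ}

lemma row_ncard (a : Fin m) : (row m n a).ncard = n := by
  have hinj : Function.Injective (fun b : Fin n => (Sum.inl (a, b) : (layeredD m n 0).E)) :=
    fun b b' hbb' => (E_inl_inj hbb').2
  have h : row m n a = Set.range (fun b : Fin n => (Sum.inl (a, b) : (layeredD m n 0).E)) := by
    ext e
    constructor
    · rintro ⟨b, rfl⟩; exact ⟨b, rfl⟩
    · rintro ⟨b, rfl⟩; exact ⟨b, rfl⟩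
  rw [h, ← Nat.card_coe_set_eq, Nat.card_range_of_injective hinj,
    Nat.card_eq_fintype_card, Fintype.card_fin]

lemma col_ncard (b : Fin n) : (col m n b).ncard = m := by
  have hinj : Function.Injective (fun a : Fin m => (Sum.inl (a, b) : (layeredD m n 0).E)) :=
    fun a a' haa' => (E_inl_inj haa').1
  have h : col m n b = Set.range (fun a : Fin m => (Sum.inl (a, b) : (layeredD m n 0).E)) := by
    ext e
    constructor
    · rintro ⟨a, rfl⟩; exact ⟨a, rfl⟩
    · rintro ⟨a, rfl⟩; exact ⟨a, rfl⟩
  rw [h, ← Nat.card_coe_set_eq, Nat.card_range_of_injective hinj,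
    Nat.card_eq_fintype_card, Fintype.card_fin]

/-- Projection of an edge to its first-layer endpoint. -/
def projRow : (layeredD m n 0).E → Fin m := Sum.elim Prod.fst (fun p => p.2.elim0)

/-- Projection of an edge to its second-layer endpoint. -/
def projCol : (layeredD m n 0).E → Fin n := Sum.elim Prod.snd (fun p => p.1)

lemma ncard_eq_sum_rows (J : Set (layeredD m n 0).E) :
    J.ncard = ∑ a : Fin m, (J ∩ row m n a).ncard := by
  classical
  have hfin : J.Finite := Set.toFinite J
  rw [Set.ncard_eq_toFinset_card J hfin,
    Finset.card_eq_sum_card_fiberwise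
      (f := projRow) (t := Finset.univ) (fun x _ => Finset.mem_univ _)]
  refine Finset.sum_congr rfl fun a _ => ?_
  have hset : J ∩ row m n a = ↑(hfin.toFinset.filter fun e => projRow e = a) := by
    ext e
    obtain ⟨a', b, rfl⟩ := edge_cases e
    constructor
    · rintro ⟨hJ, hrow⟩
      rw [Finset.mem_coe, Finset.mem_filter, Set.Finite.mem_toFinset]
      exact ⟨hJ, mem_row_iff.mp hrow⟩
    · intro h
      rw [Finset.mem_coe, Finset.mem_filter, Set.Finite.mem_toFinset] at h
      exact ⟨h.1, mem_row_iff.mpr h.2⟩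
  rw [hset, Set.ncard_coe_finset]

lemma ncard_eq_sum_cols (J : Set (layeredD m n 0).E) :
    J.ncard = ∑ b : Fin n, (J ∩ col m n b).ncard := by
  classical
  have hfin : J.Finite := Set.toFinite J
  rw [Set.ncard_eq_toFinset_card J hfin,
    Finset.card_eq_sum_card_fiberwise
      (f := projCol) (t := Finset.univ) (fun x _ => Finset.mem_univ _)]
  refine Finset.sum_congr rfl fun b _ => ?_
  have hset : J ∩ col m n b = ↑(hfin.toFinset.filter fun e => projCol e = b) := by
    ext e
    obtain ⟨a, b', rfl⟩ := edge_cases e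
    constructor
    · rintro ⟨hJ, hcol⟩
      rw [Finset.mem_coe, Finset.mem_filter, Set.Finite.mem_toFinset]
      exact ⟨hJ, mem_col_iff.mp hcol⟩
    · intro h
      rw [Finset.mem_coe, Finset.mem_filter, Set.Finite.mem_toFinset] at h
      exact ⟨h.1, mem_col_iff.mpr h.2⟩
  rw [hset, Set.ncard_coe_finset]

lemma odd_cast {k : ℕ} (h : Odd k) : (k : ZMod 2) = 1 := by
  rw [← ZMod.natCast_mod, Nat.odd_iff.mp h, Nat.cast_one]

lemma parity_eq (J : Set (layeredD m n 0).E)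
    (hrow : ∀ a : Fin m, Odd ((J ∩ row m n a).ncard))
    (hcol : ∀ b : Fin n, Odd ((J ∩ col m n b).ncard)) : m % 2 = n % 2 := by
  have e1 : ((J.ncard : ℕ) : ZMod 2) = (m : ZMod 2) := by
    rw [ncard_eq_sum_rows J, Nat.cast_sum]
    rw [Finset.sum_congr rfl fun a _ => odd_cast (hrow a)]
    simp
  have e2 : ((J.ncard : ℕ) : ZMod 2) = (n : ZMod 2) := by
    rw [ncard_eq_sum_cols J, Nat.cast_sum]
    rw [Finset.sum_congr rfl fun b _ => odd_cast (hcol b)]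
    simp
  exact (ZMod.natCast_eq_natCast_iff m n 2).mp (e1.symm.trans e2)

/-- The "cross" edge set used when both sides are even. -/
def Jx (a0 : Fin m) (b0 : Fin n) : Set (layeredD m n 0).E :=
  {e | ∃ a b, e = Sum.inl (a, b) ∧ ((a = a0) ↔ ¬(b = b0))}

lemma mem_Jx {a0 a : Fin m} {b0 b : Fin n} :
    (Sum.inl (a, b) : (layeredD m n 0).E) ∈ Jx a0 b0 ↔ (a = a0 ↔ ¬(b = b0)) := by
  constructor
  · rintro ⟨a', b', heq, hiff⟩
    obtain ⟨h1, h2⟩ := E_inl_inj heq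
    rw [h1, h2]; exact hiff
  · intro h; exact ⟨a, b, rfl, h⟩

lemma Jx_inter_row (a0 : Fin m) (b0 : Fin n) (a : Fin m) (ha : a ≠ a0) :
    Jx a0 b0 ∩ row m n a = {Sum.inl (a, b0)} := by
  ext e
  obtain ⟨a', b, rfl⟩ := edge_cases e
  constructor
  · rintro ⟨hJx, hrow⟩
    have ha' : a' = a := mem_row_iff.mp hrow
    subst ha'
    have hiff := mem_Jx.mp hJx
    have hb : b = b0 := not_not.mp (fun hb => ha (hiff.mpr hb))
    subst hb
    rfl
  · intro h
    have h' : (Sum.inl (a', b) : (layeredD m n 0).E) = Sum.inl (a, b0) := h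
    obtain ⟨h1, h2⟩ := E_inl_inj h'
    subst h1
    subst h2
    exact ⟨mem_Jx.mpr ⟨fun h'' => absurd h'' ha, fun h'' => absurd rfl h''⟩,
      mem_row_iff.mpr rfl⟩

lemma Jx_inter_col (a0 : Fin m) (b0 : Fin n) (b : Fin n) (hb : b ≠ b0) :
    Jx a0 b0 ∩ col m n b = {Sum.inl (a0, b)} := by
  ext e
  obtain ⟨a, b', rfl⟩ := edge_cases e
  constructor
  · rintro ⟨hJx, hcol⟩
    have hb' : b' = b := mem_col_iff.mp hcol
    subst hb'
    have ha : a = a0 := (mem_Jx.mp hJx).mpr hb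
    subst ha
    rfl
  · intro h
    have h' : (Sum.inl (a, b') : (layeredD m n 0).E) = Sum.inl (a0, b) := h
    obtain ⟨h1, h2⟩ := E_inl_inj h'
    subst h1
    subst h2
    exact ⟨mem_Jx.mpr ⟨fun _ => hb, fun _ => rfl⟩, mem_col_iff.mpr rfl⟩

lemma Jx_inter_row0 (a0 : Fin m) (b0 : Fin n) :
    (Jx a0 b0 ∩ row m n a0).ncard = n - 1 := by
  have heq : Jx a0 b0 ∩ row m n a0 =
      Set.range (fun b : {b : Fin n // b ≠ b0} =>
        (Sum.inl (a0, b.1) : (layeredD m n 0).E)) := by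
    ext e
    obtain ⟨a', b, rfl⟩ := edge_cases e
    constructor
    · rintro ⟨hJx, hrow⟩
      have ha' : a' = a0 := mem_row_iff.mp hrow
      subst ha'
      exact ⟨⟨b, (mem_Jx.mp hJx).mp rfl⟩, rfl⟩
    · rintro ⟨⟨b', hb'⟩, heq⟩
      have h' : (Sum.inl (a0, b') : (layeredD m n 0).E) = Sum.inl (a', b) := heq
      obtain ⟨h1, h2⟩ := E_inl_inj h'
      subst h2
      exact ⟨mem_Jx.mpr ⟨fun _ => hb', fun _ => h1.symm⟩, mem_row_iff.mpr h1.symm⟩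
  have hinj : Function.Injective (fun b : {b : Fin n // b ≠ b0} =>
      (Sum.inl (a0, b.1) : (layeredD m n 0).E)) :=
    fun b b' hbb' => Subtype.ext (E_inl_inj hbb').2
  rw [heq, ← Nat.card_coe_set_eq, Nat.card_range_of_injective hinj,
    Nat.card_eq_fintype_card]
  simp [Fintype.card_subtype_compl]

lemma Jx_inter_col0 (a0 : Fin m) (b0 : Fin n) :
    (Jx a0 b0 ∩ col m n b0).ncard = m - 1 := by
  have heq : Jx a0 b0 ∩ col m n b0 =
      Set.range (fun a : {a : Fin m // a ≠ a0} =>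
        (Sum.inl (a.1, b0) : (layeredD m n 0).E)) := by
    ext e
    obtain ⟨a, b', rfl⟩ := edge_cases e
    constructor
    · rintro ⟨hJx, hcol⟩
      have hb' : b' = b0 := mem_col_iff.mp hcol
      subst hb'
      have ha : a ≠ a0 := fun h => ((mem_Jx.mp hJx).mp h) rfl
      exact ⟨⟨a, ha⟩, rfl⟩
    · rintro ⟨⟨a', ha'⟩, heq⟩
      have h' : (Sum.inl (a', b0) : (layeredD m n 0).E) = Sum.inl (a, b') := heq
      obtain ⟨h1, h2⟩ := E_inl_inj h'
      subst h1
      exact ⟨mem_Jx.mpr ⟨fun h => absurd h ha', fun h => absurd h2.symm h⟩,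
        mem_col_iff.mpr h2.symm⟩
  have hinj : Function.Injective (fun a : {a : Fin m // a ≠ a0} =>
      (Sum.inl (a.1, b0) : (layeredD m n 0).E)) :=
    fun a a' haa' => Subtype.ext (E_inl_inj haa').1
  rw [heq, ← Nat.card_coe_set_eq, Nat.card_range_of_injective hinj,
    Nat.card_eq_fintype_card]
  simp [Fintype.card_subtype_compl]

end Stmt16

-- STATEMENT 16
theorem stmt16 (n₁ n₂ : ℕ) (h₁ : 1 ≤ n₁) (h₂ : 1 ≤ n₂) :
    (layeredD n₁ n₂ 0).HasOddDijoin ↔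
      (min n₁ n₂ ≤ 1 ∨ (2 ≤ n₁ ∧ 2 ≤ n₂ ∧ n₁ % 2 = n₂ % 2)) := by
  constructor
  · rintro ⟨J, hJ⟩
    by_contra hc
    push_neg at hc
    obtain ⟨hmin, hpar⟩ := hc
    have hm2 : 2 ≤ n₁ := by omega
    have hn2 : 2 ≤ n₂ := by omega
    have hrow : ∀ a : Fin n₁, Odd ((J ∩ Stmt16.row n₁ n₂ a).ncard) := fun a =>
      hJ _ ⟨Stmt16.row_isBond hm2 h₂ a, Stmt16.row_isDirectedCut h₂ a⟩
    have hcol : ∀ b : Fin n₂, Odd ((J ∩ Stmt16.col n₁ n₂ b).ncard) := fun b =>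
      hJ _ ⟨Stmt16.col_isBond h₁ hn2 b, Stmt16.col_isDirectedCut h₁ b⟩
    exact hpar hm2 hn2 (Stmt16.parity_eq J hrow hcol)
  · intro h
    by_cases hA : min n₁ n₂ ≤ 1
    · refine ⟨Set.univ, fun S hS => ?_⟩
      rcases Stmt16.directedBond_cases h₁ h₂ hS with ⟨a, rfl, hc⟩ | ⟨b, rfl, hc⟩
      · rw [Set.univ_inter, Stmt16.row_ncard, Nat.odd_iff]
        have hn1 : n₂ = 1 := by
          by_cases h' : 2 ≤ n₂
          · have := hc h'; omega
          · omega
        omega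
      · rw [Set.univ_inter, Stmt16.col_ncard, Nat.odd_iff]
        have hm1 : n₁ = 1 := by
          by_cases h' : 2 ≤ n₁
          · have := hc h'; omega
          · omega
        omega
    · have hm2 : 2 ≤ n₁ := by omega
      have hn2 : 2 ≤ n₂ := by omega
      have hpq : n₁ % 2 = n₂ % 2 := by
        rcases h with h | ⟨-, -, h⟩
        · omega
        · exact h
      by_cases hodd : n₁ % 2 = 1
      · refine ⟨Set.univ, fun S hS => ?_⟩
        rcases Stmt16.directedBond_cases h₁ h₂ hS with ⟨a, rfl, -⟩ | ⟨b, rfl, -⟩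
        · rw [Set.univ_inter, Stmt16.row_ncard, Nat.odd_iff]; omega
        · rw [Set.univ_inter, Stmt16.col_ncard, Nat.odd_iff]; omega
      · refine ⟨Stmt16.Jx ⟨0, by omega⟩ ⟨0, by omega⟩, fun S hS => ?_⟩
        rcases Stmt16.directedBond_cases h₁ h₂ hS with ⟨a, rfl, -⟩ | ⟨b, rfl, -⟩
        · by_cases ha : a = ⟨0, by omega⟩
          · subst ha
            rw [Stmt16.Jx_inter_row0, Nat.odd_iff]
            omega
          · rw [Stmt16.Jx_inter_row _ _ _ ha, Set.ncard_singleton]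
            exact odd_one
        · by_cases hb : b = ⟨0, by omega⟩
          · subst hb
            rw [Stmt16.Jx_inter_col0, Nat.odd_iff]
            omega
          · rw [Stmt16.Jx_inter_col _ _ _ hb, Set.ncard_singleton]
            exact odd_one
end
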